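/- arXiv:2108.04871 — 6 statements merged into one kernel-verified Lean document; each statement's English description precedes it below -/
import Mathlib

section
/- Let q be a prime power, v ≥ 3, and 1 ≤ t ≤ q − 1. Let K0 be a (t mod q)-arc defined on the points of a hyperplane H of PG(v−1,q) (where the lines of H are the lines of PG(v−1,q) contained in H), and let P be a point not lying in H. Define the arc K on PG(v−1,q) by K(P) = t and, for every point Q ≠ P, K(Q) = K0(R), where R is the unique point of H on the line through P and Q. Then K is a (t mod q)-arc in PG(v−1,q) of cardinality q·#K0 + t, and if K0 is strong then K is strong. -/
open Module

/-- The set of subspaces of the vector space `F^v` of (algebraic) dimension `k`;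
for `k = 1` these are the points of `PG(v-1, q)`, for `k = 2` the lines, and
for `k = v - 1` the hyperplanes. -/
abbrev PSub (F : Type*) [Field F] (v k : ℕ) :=
  {S : Submodule F (Fin v → F) // Module.finrank F S = k}

/-- The multiplicity `K(S)` of a subspace `S` with respect to the arc `K`. -/
noncomputable def pmult {F : Type*} [Field F] {v : ℕ}
    (K : PSub F v 1 → ℕ) (S : Submodule F (Fin v → F)) : ℕ :=
  ∑ᶠ (P : PSub F v 1) (_ : P.1 ≤ S), K P

/-- The cardinality `#K` of the arc `K`. -/
noncomputable def pcard {F : Type*} [Field F] {v : ℕ} (K : PSub F v 1 → ℕ) : ℕ :=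
  ∑ᶠ P : PSub F v 1, K P

section Helpers

variable {F : Type*} [Field F] {v : ℕ}

private lemma psub_finite [Finite F] : Finite (PSub F v 1) := by
  have : Finite (Submodule F (Fin v → F)) :=
    Finite.of_injective (fun S => (S : Set (Fin v → F))) SetLike.coe_injective
  exact Subtype.finite

private lemma point_eq_of_le {P Q : PSub F v 1} (h : P.1 ≤ Q.1) : P = Q :=
  Subtype.ext (Submodule.eq_of_le_of_finrank_eq h (P.2.trans Q.2.symm))

private lemma exists_span (S : Submodule F (Fin v → F)) (hS : finrank F S = 1) :
    ∃ x : Fin v → F, x ≠ 0 ∧ x ∈ S ∧ S = Submodule.span F {x} := by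
  have hSbot : S ≠ ⊥ := by
    intro h
    rw [h, finrank_bot] at hS
    omega
  obtain ⟨x, hxS, hx0⟩ := Submodule.exists_mem_ne_zero_of_ne_bot hSbot
  refine ⟨x, hx0, hxS, ?_⟩
  have hle : Submodule.span F {x} ≤ S := by
    rw [Submodule.span_le, Set.singleton_subset_iff]; exact hxS
  exact (Submodule.eq_of_le_of_finrank_eq hle
    (by rw [finrank_span_singleton hx0, hS])).symm

private lemma finrank_sup_point (P : PSub F v 1) (S : Submodule F (Fin v → F))
    (h : ¬ P.1 ≤ S) : finrank F ↥(P.1 ⊔ S) = finrank F ↥S + 1 := by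
  have hlt : P.1 ⊓ S < P.1 := lt_of_le_of_ne inf_le_left (by
    intro he
    exact h (he ▸ inf_le_right))
  have h0 : finrank F ↥(P.1 ⊓ S) = 0 := by
    have := Submodule.finrank_lt_finrank_of_lt hlt
    rw [P.2] at this
    omega
  have := Submodule.finrank_sup_add_finrank_inf_eq P.1 S
  rw [P.2, h0] at this
  omega

private lemma finrank_inf_hyperplane (hv : 1 ≤ v) (H : PSub F v (v - 1))
    (S : Submodule F (Fin v → F)) (hS : ¬ S ≤ H.1) :
    finrank F ↥(S ⊓ H.1) + 1 = finrank F ↥S := by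
  have htop : S ⊔ H.1 = ⊤ := by
    have hlt : H.1 < S ⊔ H.1 := lt_of_le_of_ne le_sup_right (by
      intro he
      exact hS (le_sup_left.trans he.symm.le))
    have h1 := Submodule.finrank_lt_finrank_of_lt hlt
    rw [H.2] at h1
    have h2 : finrank F ↥(S ⊔ H.1) ≤ v := by
      have := Submodule.finrank_le (S ⊔ H.1)
      rwa [Module.finrank_fin_fun] at this
    apply Submodule.eq_top_of_finrank_eq
    rw [Module.finrank_fin_fun]
    omega
  have := Submodule.finrank_sup_add_finrank_inf_eq S H.1
  rw [htop, H.2] at this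
  have htoprk : finrank F ↥(⊤ : Submodule F (Fin v → F)) = v := by
    rw [finrank_top, Module.finrank_fin_fun]
  rw [htoprk] at this
  omega

open scoped Classical

variable {F : Type*} [Field F] {v : ℕ}

private lemma pmult_eq [Fintype F] [Fintype (PSub F v 1)] (K : PSub F v 1 → ℕ)
    (S : Submodule F (Fin v → F)) :
    pmult K S = ∑ P ∈ Finset.univ.filter (fun P : PSub F v 1 => P.1 ≤ S), K P := by
  classical
  unfold pmult
  have h : ∀ P : PSub F v 1, (∑ᶠ _ : P.1 ≤ S, K P) = if P.1 ≤ S then K P else 0 :=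
    fun P => finsum_eq_if
  rw [finsum_congr h, finsum_eq_sum_of_fintype, Finset.sum_filter]

-- number of points in a 2-dim space other than a given point P0 equals |F|
private lemma card_points_ne [Fintype F] [Fintype (PSub F v 1)] [DecidableEq (PSub F v 1)]
    (L : Submodule F (Fin v → F)) (hL : finrank F L = 2) (P0 : PSub F v 1) (hP0 : P0.1 ≤ L) :
    (Finset.univ.filter (fun Q : PSub F v 1 => Q.1 ≤ L ∧ Q ≠ P0)).card = Fintype.card F := by
  classical
  obtain ⟨p0, hp00, hp0m, hp0s⟩ := exists_span P0.1 P0.2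
  have hlt : P0.1 < L := lt_of_le_of_ne hP0 (by intro h; rw [← h, P0.2] at hL; omega)
  obtain ⟨r, hrL, hrP⟩ := SetLike.exists_of_lt hlt
  have key : ∀ c : F, r + c • p0 ≠ 0 := by
    intro c hc
    apply hrP
    have : r = -(c • p0) := by
      rw [eq_neg_iff_add_eq_zero]; exact hc
    rw [this]
    exact Submodule.neg_mem _ (Submodule.smul_mem _ _ hp0m)
  symm
  apply Finset.card_bij (fun (c : F) _ =>
    (⟨Submodule.span F {r + c • p0}, finrank_span_singleton (key c)⟩ : PSub F v 1))
  · intro c _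
    simp only [Finset.mem_filter, Finset.mem_univ, true_and]
    constructor
    · rw [Submodule.span_le, Set.singleton_subset_iff]
      exact L.add_mem hrL (L.smul_mem _ (hP0 hp0m))
    · intro h
      apply hrP
      have hm : r + c • p0 ∈ P0.1 := by
        rw [← h]; exact Submodule.mem_span_singleton_self _
      have := P0.1.sub_mem hm (P0.1.smul_mem c hp0m)
      simpa using this
  · intro c _ c' _ h
    have hmem : r + c' • p0 ∈ Submodule.span F {r + c • p0} := by
      rw [Subtype.ext_iff] at h
      simp only at h
      rw [h]; exact Submodule.mem_span_singleton_self _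
    obtain ⟨a, ha⟩ := Submodule.mem_span_singleton.mp hmem
    have h2 : (1 - a) • r = (a * c - c') • p0 := by
      linear_combination (norm := module) -ha
    have ha1 : a = 1 := by
      by_contra hne
      apply hrP
      have : r = ((1 - a)⁻¹ * (a * c - c')) • p0 := by
        rw [mul_smul, ← h2, smul_smul, inv_mul_cancel₀ (sub_ne_zero.mpr (Ne.symm hne)), one_smul]
      rw [this]; exact P0.1.smul_mem _ hp0m
    rw [ha1, one_smul] at ha
    have : (c' - c) • p0 = 0 := by
      rw [sub_smul, sub_eq_zero]
      have := ha.symm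
      rwa [add_right_inj] at this
    rcases smul_eq_zero.mp this with h | h
    · exact (sub_eq_zero.mp h).symm
    · exact absurd h hp00
  · intro Q hQ
    simp only [Finset.mem_filter, Finset.mem_univ, true_and] at hQ
    obtain ⟨hQL, hQP⟩ := hQ
    obtain ⟨w, hw0, hwm, hws⟩ := exists_span Q.1 Q.2
    have hrP0 : ¬ P0.1 ≤ Submodule.span F {r} := by
      intro h
      have heq : P0.1 = Submodule.span F {r} := Submodule.eq_of_le_of_finrank_eq h
        (by rw [P0.2, finrank_span_singleton (by rintro rfl; exact hrP P0.1.zero_mem)])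
      exact hrP (heq ▸ Submodule.mem_span_singleton_self r : r ∈ P0.1)
    have hLeq : P0.1 ⊔ Submodule.span F {r} = L := by
      apply Submodule.eq_of_le_of_finrank_eq
      · exact sup_le hP0 (by rw [Submodule.span_le, Set.singleton_subset_iff]; exact hrL)
      · rw [finrank_sup_point P0 _ hrP0,
          finrank_span_singleton (by rintro rfl; exact hrP P0.1.zero_mem), hL]
    have hwL : w ∈ P0.1 ⊔ Submodule.span F {r} := hLeq ▸ hQL hwm
    obtain ⟨y, hy, z, hz, hyz⟩ := Submodule.mem_sup.mp hwL
    rw [hp0s] at hy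
    obtain ⟨b, rfl⟩ := Submodule.mem_span_singleton.mp hy
    obtain ⟨d, rfl⟩ := Submodule.mem_span_singleton.mp hz
    have hd : d ≠ 0 := by
      rintro rfl
      apply hQP
      apply point_eq_of_le
      rw [hws, Submodule.span_le, Set.singleton_subset_iff]
      rw [← hyz]
      simpa using P0.1.smul_mem b hp0m
    refine ⟨d⁻¹ * b, Finset.mem_univ _, ?_⟩
    apply Subtype.ext
    simp only
    have hvec : r + (d⁻¹ * b) • p0 = d⁻¹ • w := by
      rw [← hyz, smul_add, smul_smul, smul_smul, inv_mul_cancel₀ hd, one_smul]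
      abel
    rw [hvec, Submodule.span_singleton_smul_eq (IsUnit.mk0 _ (inv_ne_zero hd)) w, hws]

private lemma finrank_sup_two {P0 Q : PSub F v 1} (h : Q ≠ P0) :
    finrank F ↥(P0.1 ⊔ Q.1) = 2 := by
  have hle : ¬ P0.1 ≤ Q.1 := fun hle => h (point_eq_of_le hle).symm
  rw [finrank_sup_point P0 Q.1 hle, Q.2]

private lemma proj_point (hv : 1 ≤ v) (H : PSub F v (v - 1)) {P0 : PSub F v 1}
    (hP0 : ¬ P0.1 ≤ H.1) {Q : PSub F v 1} (hQ : Q ≠ P0) :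
    finrank F ↥((P0.1 ⊔ Q.1) ⊓ H.1) = 1 := by
  have h2 := finrank_sup_two hQ
  have := finrank_inf_hyperplane hv H (P0.1 ⊔ Q.1) (fun hle => hP0 (le_sup_left.trans hle))
  omega

private lemma sup_eq_sup {P0 Q R : PSub F v 1} (hQ : Q ≠ P0) (hR : R ≠ P0)
    (h : R.1 ≤ P0.1 ⊔ Q.1) : P0.1 ⊔ R.1 = P0.1 ⊔ Q.1 :=
  Submodule.eq_of_le_of_finrank_eq (sup_le le_sup_left h)
    ((finrank_sup_two hR).trans (finrank_sup_two hQ).symm)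

private lemma proj_eq (hv : 1 ≤ v) (H : PSub F v (v - 1)) {P0 : PSub F v 1}
    (hP0 : ¬ P0.1 ≤ H.1) {Q R : PSub F v 1} (hQ : Q ≠ P0) (hRH : R.1 ≤ H.1)
    (hR : R.1 ≤ P0.1 ⊔ Q.1) : R.1 = (P0.1 ⊔ Q.1) ⊓ H.1 :=
  Submodule.eq_of_le_of_finrank_eq (le_inf hR hRH) (R.2.trans (proj_point hv H hP0 hQ).symm)

private lemma inf_line {P0 : PSub F v 1} {L : PSub F v 2} (hPL : ¬ P0.1 ≤ L.1)
    {U : Submodule F (Fin v → F)} (hU2 : finrank F ↥U = 2) (hP0U : P0.1 ≤ U)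
    (hUM : U ≤ P0.1 ⊔ L.1) : finrank F ↥(U ⊓ L.1) = 1 := by
  have hM3 : finrank F ↥(P0.1 ⊔ L.1) = 3 := by
    rw [finrank_sup_point P0 L.1 hPL, L.2]
  have hsup : U ⊔ L.1 = P0.1 ⊔ L.1 := by
    apply le_antisymm
    · exact sup_le hUM le_sup_right
    · exact sup_le (hP0U.trans le_sup_left) le_sup_right
  have := Submodule.finrank_sup_add_finrank_inf_eq U L.1
  rw [hsup, hM3, hU2, L.2] at this
  omega

end Helpers

/-- The lifting construction: if `K0` is a `(t mod q)`-arc on a hyperplane `H`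
of `PG(v-1,q)`, `P0` is a point outside `H`, and `K` is defined by `K P0 = t`
and `K Q = K0 R` for `Q ≠ P0`, where `R` is the unique point of `H` on the line
through `P0` and `Q`, then `K` is a `(t mod q)`-arc of cardinality
`q * #K0 + t`, and it is strong whenever `K0` is strong. -/
theorem stmt1 {F : Type*} [Field F] [Fintype F] (q : ℕ) (hq : Fintype.card F = q)
    {v : ℕ} (hv : 3 ≤ v) (t : ℕ) (ht1 : 1 ≤ t) (ht2 : t ≤ q - 1)
    (H : PSub F v (v - 1)) (K0 : PSub F v 1 → ℕ)
    (hK0 : ∀ L : PSub F v 2, L.1 ≤ H.1 → pmult K0 L.1 ≡ t [MOD q])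
    (P0 : PSub F v 1) (hP0 : ¬ P0.1 ≤ H.1)
    (K : PSub F v 1 → ℕ)
    (hKP0 : K P0 = t)
    (hKlift : ∀ Q : PSub F v 1, Q ≠ P0 →
      ∀ R : PSub F v 1, R.1 ≤ H.1 → R.1 ≤ P0.1 ⊔ Q.1 → K Q = K0 R) :
    (∀ L : PSub F v 2, pmult K L.1 ≡ t [MOD q]) ∧
    pcard K = q * pmult K0 H.1 + t ∧
    ((∀ R : PSub F v 1, R.1 ≤ H.1 → K0 R ≤ t) → ∀ P : PSub F v 1, K P ≤ t) := by
  classical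
  haveI : Finite (PSub F v 1) := psub_finite
  haveI : Fintype (PSub F v 1) := Fintype.ofFinite _
  subst hq
  have hv1 : 1 ≤ v := by omega
  have hPltH : ∀ R : PSub F v 1, R.1 ≤ H.1 → R ≠ P0 := by
    intro R hR h
    exact hP0 (by rw [← h]; exact hR)
  refine ⟨?_, ?_, ?_⟩
  · -- every line has multiplicity ≡ t mod q
    intro L
    rw [pmult_eq]
    by_cases hPL : P0.1 ≤ L.1
    · -- line through P0
      have hLH : ¬ L.1 ≤ H.1 := fun h => hP0 (hPL.trans h)
      have hR1 : finrank F ↥(L.1 ⊓ H.1) = 1 := by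
        have := finrank_inf_hyperplane hv1 H L.1 hLH
        rw [L.2] at this; omega
      set R : PSub F v 1 := ⟨L.1 ⊓ H.1, hR1⟩ with hRdef
      have hsplit : Finset.univ.filter (fun P : PSub F v 1 => P.1 ≤ L.1)
          = insert P0 (Finset.univ.filter (fun Q : PSub F v 1 => Q.1 ≤ L.1 ∧ Q ≠ P0)) := by
        ext Q
        simp only [Finset.mem_filter, Finset.mem_univ, true_and, Finset.mem_insert]
        constructor
        · intro h
          by_cases hq : Q = P0
          · exact Or.inl hq
          · exact Or.inr ⟨h, hq⟩
        · rintro (rfl | ⟨h, _⟩)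
          · exact hPL
          · exact h
      rw [hsplit, Finset.sum_insert (by simp)]
      have hcongr : ∀ Q ∈ Finset.univ.filter (fun Q : PSub F v 1 => Q.1 ≤ L.1 ∧ Q ≠ P0),
          K Q = K0 R := by
        intro Q hQ
        simp only [Finset.mem_filter, Finset.mem_univ, true_and] at hQ
        obtain ⟨hQL, hQP⟩ := hQ
        have hsup : P0.1 ⊔ Q.1 = L.1 :=
          Submodule.eq_of_le_of_finrank_eq (sup_le hPL hQL) (by rw [finrank_sup_two hQP, L.2])
        exact hKlift Q hQP R inf_le_right (by rw [hsup]; exact inf_le_left)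
      rw [Finset.sum_congr rfl hcongr, Finset.sum_const,
        card_points_ne L.1 L.2 P0 hPL, hKP0, smul_eq_mul]
      have h0 : Fintype.card F * K0 R ≡ 0 [MOD Fintype.card F] :=
        (Nat.modEq_zero_iff_dvd).mpr ⟨K0 R, rfl⟩
      simpa using (Nat.ModEq.refl t).add h0
    · -- line not through P0
      have hL0rk : finrank F ↥((P0.1 ⊔ L.1) ⊓ H.1) = 2 := by
        have hM3 : finrank F ↥(P0.1 ⊔ L.1) = 3 := by
          rw [finrank_sup_point P0 L.1 hPL, L.2]
        have := finrank_inf_hyperplane hv1 H (P0.1 ⊔ L.1)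
          (fun h => hP0 (le_sup_left.trans h))
        omega
      set L0 : PSub F v 2 := ⟨(P0.1 ⊔ L.1) ⊓ H.1, hL0rk⟩ with hL0def
      have key := hK0 L0 inf_le_right
      rw [pmult_eq] at key
      have hQne : ∀ Q : PSub F v 1, Q.1 ≤ L.1 → Q ≠ P0 := by
        intro Q h he
        exact hPL (by rw [← he]; exact h)
      have hsum : ∑ Q ∈ Finset.univ.filter (fun Q : PSub F v 1 => Q.1 ≤ L.1), K Q
          = ∑ R ∈ Finset.univ.filter (fun R : PSub F v 1 => R.1 ≤ L0.1), K0 R := by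
        refine Finset.sum_bij (fun (Q : PSub F v 1) hQ =>
          (⟨(P0.1 ⊔ Q.1) ⊓ H.1, proj_point hv1 H hP0 (hQne Q (by
            simpa using hQ))⟩ : PSub F v 1)) ?_ ?_ ?_ ?_
        · intro Q hQ
          simp only [Finset.mem_filter, Finset.mem_univ, true_and] at hQ ⊢
          exact inf_le_inf_right H.1 (sup_le le_sup_left (hQ.trans le_sup_right))
        · intro Q1 h1 Q2 h2 heq
          simp only [Finset.mem_filter, Finset.mem_univ, true_and] at h1 h2
          rw [Subtype.mk.injEq] at heq
          set Rp : PSub F v 1 :=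
            ⟨(P0.1 ⊔ Q1.1) ⊓ H.1, proj_point hv1 H hP0 (hQne Q1 h1)⟩ with hRpdef
          have hRpne : Rp ≠ P0 := hPltH Rp inf_le_right
          have hsup1 : P0.1 ⊔ Rp.1 = P0.1 ⊔ Q1.1 :=
            sup_eq_sup (hQne Q1 h1) hRpne inf_le_left
          have hsup2 : P0.1 ⊔ Rp.1 = P0.1 ⊔ Q2.1 :=
            sup_eq_sup (hQne Q2 h2) hRpne
              (show (P0.1 ⊔ Q1.1) ⊓ H.1 ≤ _ from heq.le.trans inf_le_left)
          have hss : P0.1 ⊔ Q1.1 = P0.1 ⊔ Q2.1 := hsup1 ▸ hsup2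
          have hN1 : finrank F ↥((P0.1 ⊔ Q2.1) ⊓ L.1) = 1 :=
            inf_line hPL (finrank_sup_two (hQne Q2 h2)) le_sup_left
              (sup_le le_sup_left (h2.trans le_sup_right))
          have e1 : Q1.1 = (P0.1 ⊔ Q2.1) ⊓ L.1 :=
            Submodule.eq_of_le_of_finrank_eq
              (le_inf (hss ▸ le_sup_right) h1) (Q1.2.trans hN1.symm)
          have e2 : Q2.1 = (P0.1 ⊔ Q2.1) ⊓ L.1 :=
            Submodule.eq_of_le_of_finrank_eq (le_inf le_sup_right h2) (Q2.2.trans hN1.symm)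
          exact Subtype.ext (e1.trans e2.symm)
        · intro R hR
          simp only [Finset.mem_filter, Finset.mem_univ, true_and] at hR
          have hRH : R.1 ≤ H.1 := hR.trans inf_le_right
          have hRne : R ≠ P0 := hPltH R hRH
          have hN1 : finrank F ↥((P0.1 ⊔ R.1) ⊓ L.1) = 1 :=
            inf_line hPL (finrank_sup_two hRne) le_sup_left
              (sup_le le_sup_left (hR.trans inf_le_left))
          set Q : PSub F v 1 := ⟨(P0.1 ⊔ R.1) ⊓ L.1, hN1⟩ with hQdef
          have hQL : Q.1 ≤ L.1 := inf_le_right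
          refine ⟨Q, by simpa using hQL, ?_⟩
          have hQneP : Q ≠ P0 := hQne Q hQL
          have hsupQR : P0.1 ⊔ Q.1 = P0.1 ⊔ R.1 := sup_eq_sup hRne hQneP inf_le_left
          apply Subtype.ext
          simp only
          rw [hsupQR]
          exact (proj_eq hv1 H hP0 hRne hRH le_sup_right).symm
        · intro Q hQ
          simp only [Finset.mem_filter, Finset.mem_univ, true_and] at hQ
          exact hKlift Q (hQne Q hQ) _ inf_le_right inf_le_left
      rw [hsum]
      exact key
  · -- cardinality
    rw [pcard, finsum_eq_sum_of_fintype, pmult_eq,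
      ← Finset.add_sum_erase Finset.univ K (Finset.mem_univ P0), hKP0]
    set π : PSub F v 1 → PSub F v 1 := fun Q =>
      if h : Q = P0 then P0 else ⟨(P0.1 ⊔ Q.1) ⊓ H.1, proj_point hv1 H hP0 h⟩ with hπdef
    have hmaps : ∀ Q ∈ Finset.univ.erase P0,
        π Q ∈ Finset.univ.filter (fun R : PSub F v 1 => R.1 ≤ H.1) := by
      intro Q hQ
      have hne : Q ≠ P0 := (Finset.mem_erase.mp hQ).1
      simp only [Finset.mem_filter, Finset.mem_univ, true_and, hπdef, dif_neg hne]
      exact inf_le_right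
    rw [← Finset.sum_fiberwise_of_maps_to hmaps K]
    have hinner : ∀ R ∈ Finset.univ.filter (fun R : PSub F v 1 => R.1 ≤ H.1),
        ∑ Q ∈ (Finset.univ.erase P0).filter (fun Q => π Q = R), K Q
          = Fintype.card F * K0 R := by
      intro R hR
      have hRH : R.1 ≤ H.1 := by simpa using hR
      have hRne : R ≠ P0 := hPltH R hRH
      have hfib : (Finset.univ.erase P0).filter (fun Q => π Q = R)
          = Finset.univ.filter (fun Q : PSub F v 1 => Q.1 ≤ P0.1 ⊔ R.1 ∧ Q ≠ P0) := by
        ext Q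
        simp only [Finset.mem_filter, Finset.mem_erase, Finset.mem_univ, true_and, and_true]
        constructor
        · rintro ⟨hne, hπ⟩
          rw [hπdef] at hπ
          simp only [dif_neg hne] at hπ
          rw [Subtype.ext_iff] at hπ
          simp only at hπ
          have hRle : R.1 ≤ P0.1 ⊔ Q.1 := hπ ▸ inf_le_left
          have := sup_eq_sup hne hRne hRle
          exact ⟨this ▸ le_sup_right, hne⟩
        · rintro ⟨hQle, hne⟩
          refine ⟨hne, ?_⟩
          rw [hπdef]
          simp only [dif_neg hne]
          apply Subtype.ext
          simp only
          have hss : P0.1 ⊔ Q.1 = P0.1 ⊔ R.1 := sup_eq_sup hRne hne hQle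
          rw [hss]
          exact (proj_eq hv1 H hP0 hRne hRH le_sup_right).symm
      rw [hfib]
      have hcongr : ∀ Q ∈ Finset.univ.filter
          (fun Q : PSub F v 1 => Q.1 ≤ P0.1 ⊔ R.1 ∧ Q ≠ P0), K Q = K0 R := by
        intro Q hQ
        simp only [Finset.mem_filter, Finset.mem_univ, true_and] at hQ
        obtain ⟨hQle, hne⟩ := hQ
        have hss : P0.1 ⊔ Q.1 = P0.1 ⊔ R.1 := sup_eq_sup hRne hne hQle
        exact hKlift Q hne R hRH (hss ▸ le_sup_right)
      rw [Finset.sum_congr rfl hcongr, Finset.sum_const, smul_eq_mul,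
        card_points_ne (P0.1 ⊔ R.1) (finrank_sup_two hRne) P0 le_sup_left]
    rw [Finset.sum_congr rfl hinner, ← Finset.mul_sum]
    omega
  · -- strongness
    intro hstrong P
    by_cases hP : P = P0
    · rw [hP, hKP0]
    · have hR := proj_point hv1 H hP0 hP
      set R : PSub F v 1 := ⟨(P0.1 ⊔ P.1) ⊓ H.1, hR⟩
      rw [hKlift P hP R inf_le_right inf_le_left]
      exact hstrong R inf_le_right
end

section
/- Let q be a prime power, v ≥ 3, 1 ≤ t ≤ q − 1, and let K be a lifted (t mod q)-arc in PG(v−1,q). If P and Q are two distinct lifting points of K, then every point of the line through P and Q is a lifting point of K. -/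
open Module

/-- `P0` is a lifting point of the arc `K`: there are a hyperplane `H` not
containing `P0` and a `(t mod q)`-arc `K0` on `H` such that `K` is the lift of
`K0` from `P0`, i.e. `K P0 = t` and for every point `Q ≠ P0`, `K Q = K0 R`
where `R` is the unique point of `H` on the line through `P0` and `Q`. -/
def IsLiftingPoint {F : Type*} [Field F] {v : ℕ} (q t : ℕ)
    (K : PSub F v 1 → ℕ) (P0 : PSub F v 1) : Prop :=
  ∃ H : PSub F v (v - 1), ∃ K0 : PSub F v 1 → ℕ,
    ¬ P0.1 ≤ H.1 ∧
    (∀ L : PSub F v 2, L.1 ≤ H.1 → pmult K0 L.1 ≡ t [MOD q]) ∧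
    K P0 = t ∧
    ∀ Q : PSub F v 1, Q ≠ P0 →
      ∀ R : PSub F v 1, R.1 ≤ H.1 → R.1 ≤ P0.1 ⊔ Q.1 → K Q = K0 R

section Aux

variable {F : Type*} [Field F] {v : ℕ}

/-- Two distinct points span a line. -/
private lemma finrank_sup_points {A B : PSub F v 1} (h : A ≠ B) :
    finrank F ↥(A.1 ⊔ B.1) = 2 := by
  have hAB : A.1 ≠ B.1 := fun he => h (Subtype.ext he)
  have hinf : A.1 ⊓ B.1 < A.1 := by
    rcases lt_or_eq_of_le (inf_le_left : A.1 ⊓ B.1 ≤ A.1) with h' | h'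
    · exact h'
    · exact absurd (Submodule.eq_of_le_of_finrank_le (inf_eq_left.mp h')
        (by rw [A.2, B.2])) hAB
  have h0 : finrank F ↥(A.1 ⊓ B.1) = 0 := by
    have h1 := Submodule.finrank_lt_finrank_of_lt hinf
    rw [A.2] at h1
    omega
  have h2 := Submodule.finrank_sup_add_finrank_inf_eq A.1 B.1
  rw [A.2, B.2, h0] at h2
  omega

/-- A point in a line, together with another point of the line, spans it. -/
private lemma sup_point_eq {L : Submodule F (Fin v → F)} (hL : finrank F L = 2)
    {A X : PSub F v 1} (hA : A.1 ≤ L) (hX : X.1 ≤ L) (hne : A ≠ X) :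
    A.1 ⊔ X.1 = L :=
  Submodule.eq_of_le_of_finrank_le (sup_le hA hX)
    (by rw [finrank_sup_points hne, hL])

/-- A positive-dimensional subspace contains a point. -/
private lemma exists_point_le (S : Submodule F (Fin v → F))
    (hS : 1 ≤ finrank F S) : ∃ R : PSub F v 1, R.1 ≤ S := by
  have hne : S ≠ ⊥ := by
    intro h
    rw [h, finrank_bot] at hS
    omega
  obtain ⟨x, hxS, hx0⟩ := Submodule.exists_mem_ne_zero_of_ne_bot hne
  exact ⟨⟨Submodule.span F {x}, finrank_span_singleton hx0⟩,
    (Submodule.span_singleton_le_iff_mem x S).mpr hxS⟩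

/-- An arc lifted from `P0` is constant on lines through `P0`, away from `P0`. -/
private lemma const_on_lines {q t : ℕ} {K : PSub F v 1 → ℕ} {P0 : PSub F v 1}
    (hP0 : IsLiftingPoint q t K P0) {X Y : PSub F v 1}
    (hX : X ≠ P0) (hY : Y ≠ P0) (hXY : X.1 ≤ P0.1 ⊔ Y.1) : K X = K Y := by
  obtain ⟨H, K0, _, _, _, hlift⟩ := hP0
  have hL2 : finrank F ↥(P0.1 ⊔ Y.1) = 2 := finrank_sup_points (Ne.symm hY)
  have hinf : 1 ≤ finrank F ↥((P0.1 ⊔ Y.1) ⊓ H.1) := by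
    have h2 := Submodule.finrank_sup_add_finrank_inf_eq (P0.1 ⊔ Y.1) H.1
    have h3 : finrank F ↥((P0.1 ⊔ Y.1) ⊔ H.1) ≤ v := by
      have h4 := Submodule.finrank_le ((P0.1 ⊔ Y.1) ⊔ H.1)
      rwa [Module.finrank_fin_fun] at h4
    rw [hL2, H.2] at h2
    omega
  obtain ⟨R, hR⟩ := exists_point_le _ hinf
  have hRH : R.1 ≤ H.1 := hR.trans inf_le_right
  have hRL : R.1 ≤ P0.1 ⊔ Y.1 := hR.trans inf_le_left
  have e1 : K Y = K0 R := hlift Y hY R hRH hRL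
  have e2 : K X = K0 R := hlift X hX R hRH (by
    rw [sup_point_eq hL2 le_sup_left hXY (Ne.symm hX)]; exact hRL)
  rw [e1, e2]

end Aux

/-- If `P` and `Q` are two distinct lifting points of a lifted `(t mod q)`-arc
`K` in `PG(v-1,q)`, then every point of the line through `P` and `Q` is a
lifting point of `K`. -/
theorem stmt2 {F : Type*} [Field F] [Fintype F] (q : ℕ) (hq : Fintype.card F = q)
    {v : ℕ} (hv : 3 ≤ v) (t : ℕ) (ht1 : 1 ≤ t) (ht2 : t ≤ q - 1)
    (K : PSub F v 1 → ℕ)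
    (hK : ∀ L : PSub F v 2, pmult K L.1 ≡ t [MOD q])
    (P Q : PSub F v 1) (hPQ : P ≠ Q)
    (hP : IsLiftingPoint q t K P) (hQ : IsLiftingPoint q t K Q) :
    ∀ R : PSub F v 1, R.1 ≤ P.1 ⊔ Q.1 → IsLiftingPoint q t K R := by
  intro R hR
  have hQP : Q ≠ P := Ne.symm hPQ
  have hL2 : finrank F ↥(P.1 ⊔ Q.1) = 2 := finrank_sup_points hPQ
  -- every point on the line `PQ` has multiplicity `t`
  have hKline : ∀ Z : PSub F v 1, Z.1 ≤ P.1 ⊔ Q.1 → K Z = t := by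
    intro Z hZ
    by_cases hZP : Z = P
    · subst hZP; exact hP.choose_spec.choose_spec.2.2.1
    · rw [const_on_lines hP hZP hQP hZ]
      exact hQ.choose_spec.choose_spec.2.2.1
  -- `K` is constant on punctured lines through `R`
  have hconst : ∀ X Y : PSub F v 1, X ≠ R → Y ≠ R → Y.1 ≤ R.1 ⊔ X.1 →
      K X = K Y := by
    intro X Y hXR hYR hYle
    by_cases hXpq : X.1 ≤ P.1 ⊔ Q.1
    · have hRX : R.1 ⊔ X.1 = P.1 ⊔ Q.1 := sup_point_eq hL2 hR hXpq (Ne.symm hXR)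
      rw [hKline X hXpq, hKline Y (hYle.trans hRX.le)]
    · -- `X`, and hence `Y`, lies outside the line `PQ`; argue in the plane
      -- spanned by `P`, `Q`, `X`.
      have hYpq : ¬ Y.1 ≤ P.1 ⊔ Q.1 := by
        intro hy
        apply hXpq
        have h1 : R.1 ⊔ Y.1 = P.1 ⊔ Q.1 := sup_point_eq hL2 hR hy (Ne.symm hYR)
        have h2 : R.1 ⊔ Y.1 = R.1 ⊔ X.1 :=
          Submodule.eq_of_le_of_finrank_le (sup_le le_sup_left hYle)
            (by rw [finrank_sup_points (Ne.symm hXR),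
              finrank_sup_points (Ne.symm hYR)])
        calc X.1 ≤ R.1 ⊔ X.1 := le_sup_right
          _ = P.1 ⊔ Q.1 := by rw [← h2, h1]
      have hXP : X ≠ P := fun h => hXpq (h ▸ le_sup_left)
      have hYQ : Y ≠ Q := fun h => hYpq (h ▸ le_sup_right)
      -- the plane
      have hplane : finrank F ↥(P.1 ⊔ Q.1 ⊔ X.1) = 3 := by
        have hinf : (P.1 ⊔ Q.1) ⊓ X.1 < X.1 := by
          rcases lt_or_eq_of_le (inf_le_right : (P.1 ⊔ Q.1) ⊓ X.1 ≤ X.1) with h' | h'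
          · exact h'
          · exact absurd (inf_eq_right.mp h') hXpq
        have h0 : finrank F ↥((P.1 ⊔ Q.1) ⊓ X.1) = 0 := by
          have h1 := Submodule.finrank_lt_finrank_of_lt hinf
          rw [X.2] at h1
          omega
        have h2 := Submodule.finrank_sup_add_finrank_inf_eq (P.1 ⊔ Q.1) X.1
        rw [hL2, X.2, h0] at h2
        omega
      -- the intersection point `Z` of the lines `PX` and `QY`
      have hsup : (P.1 ⊔ X.1) ⊔ (Q.1 ⊔ Y.1) = P.1 ⊔ Q.1 ⊔ X.1 := by
        apply le_antisymm
        · apply sup_le (sup_le _ _) (sup_le _ _)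
          · exact le_sup_left.trans le_sup_left
          · exact le_sup_right
          · exact le_sup_right.trans le_sup_left
          · refine hYle.trans (sup_le ?_ le_sup_right)
            exact hR.trans le_sup_left
        · apply sup_le (sup_le _ _) _
          · exact le_sup_left.trans le_sup_left
          · exact (le_sup_left : Q.1 ≤ Q.1 ⊔ Y.1).trans le_sup_right
          · exact (le_sup_right : X.1 ≤ P.1 ⊔ X.1).trans le_sup_left
      have hZex : 1 ≤ finrank F ↥((P.1 ⊔ X.1) ⊓ (Q.1 ⊔ Y.1)) := by
        have h2 := Submodule.finrank_sup_add_finrank_inf_eq (P.1 ⊔ X.1) (Q.1 ⊔ Y.1)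
        rw [hsup, hplane, finrank_sup_points (Ne.symm hXP),
          finrank_sup_points (Ne.symm hYQ)] at h2
        omega
      obtain ⟨Z, hZ⟩ := exists_point_le _ hZex
      have hZPX : Z.1 ≤ P.1 ⊔ X.1 := hZ.trans inf_le_left
      have hZQY : Z.1 ≤ Q.1 ⊔ Y.1 := hZ.trans inf_le_right
      have hZP : Z ≠ P := by
        intro h
        apply hYpq
        have hPle : P.1 ≤ Q.1 ⊔ Y.1 := by rw [← h]; exact hZQY
        have he : P.1 ⊔ Q.1 = Q.1 ⊔ Y.1 :=
          Submodule.eq_of_le_of_finrank_le (sup_le hPle le_sup_left)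
            (by rw [finrank_sup_points (Ne.symm hYQ), finrank_sup_points hPQ])
        exact le_sup_right.trans he.ge
      have hZQ : Z ≠ Q := by
        intro h
        apply hXpq
        have hQle : Q.1 ≤ P.1 ⊔ X.1 := by rw [← h]; exact hZPX
        have he : P.1 ⊔ Q.1 = P.1 ⊔ X.1 :=
          Submodule.eq_of_le_of_finrank_le (sup_le le_sup_left hQle)
            (by rw [finrank_sup_points (Ne.symm hXP), finrank_sup_points hPQ])
        exact le_sup_right.trans he.ge
      have e1 : K Z = K X := const_on_lines hP hZP hXP hZPX
      have e2 : K Z = K Y := const_on_lines hQ hZQ hYQ hZQY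
      rw [← e1, e2]
  -- produce a hyperplane avoiding `R`
  obtain ⟨r, hrR, hr0⟩ := Submodule.exists_mem_ne_zero_of_ne_bot (p := R.1) (by
    intro h
    have := R.2
    rw [h, finrank_bot] at this
    omega)
  obtain ⟨i, hi⟩ : ∃ i, r i ≠ 0 := by
    by_contra h
    push_neg at h
    exact hr0 (funext h)
  set f : (Fin v → F) →ₗ[F] F := LinearMap.proj i with hf
  have hrange : LinearMap.range f = ⊤ := by
    rw [LinearMap.range_eq_top]
    intro c
    exact ⟨fun _ => c, rfl⟩
  have hker : finrank F ↥(LinearMap.ker f) = v - 1 := by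
    have h1 := LinearMap.finrank_range_add_finrank_ker f
    rw [Module.finrank_fin_fun, hrange, finrank_top, Module.finrank_self] at h1
    omega
  refine ⟨⟨LinearMap.ker f, hker⟩, K, ?_, fun L _ => hK L, hKline R hR, ?_⟩
  · intro h
    exact hi (h hrR)
  · intro Q' hQ' R' hR'H hR'le
    have hR'R : R' ≠ R := by
      intro h
      subst h
      exact hi (hR'H hrR)
    exact hconst Q' R' hQ' hR'R hR'le
end

section
/- Let q be a prime power and t, m integers with 1 ≤ t ≤ q − 1 and m ≥ t. There exists a strong (t mod q)-arc of cardinality m·q + t in PG(2,q) if and only if there exists an arc B in PG(2,q) of cardinality (m − t)·q + m such that m − t ≤ B(L) ≤ m for every line L of PG(2,q). -/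
open Module

section Dual
set_option linter.unusedSectionVars false
variable {F : Type*} [Field F] [Fintype F]

noncomputable def dIso : Submodule F (Fin 3 → F) ≃o (Submodule F (Fin 3 → F))ᵒᵈ :=
  Subspace.orderIsoFiniteDimensional.trans
    ((Submodule.orderIsoMapComap
      ((Pi.basisFun F (Fin 3)).toDualEquiv.symm : Dual F (Fin 3 → F) ≃ₗ[F] (Fin 3 → F))).dual)

noncomputable def dSub (W : Submodule F (Fin 3 → F)) : Submodule F (Fin 3 → F) :=
  OrderDual.ofDual (dIso W)

lemma dSub_antitone (W W' : Submodule F (Fin 3 → F)) :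
    dSub W' ≤ dSub W ↔ W ≤ W' := by
  show OrderDual.toDual (OrderDual.ofDual (dIso W)) ≤ OrderDual.toDual (OrderDual.ofDual (dIso W'))
    ↔ _
  simp only [OrderDual.toDual_ofDual]
  exact dIso.le_iff_le

lemma dSub_finrank (W : Submodule F (Fin 3 → F)) :
    finrank F (dSub W) = 3 - finrank F W := by
  have h1 : dSub W =
      Submodule.map (((Pi.basisFun F (Fin 3)).toDualEquiv.symm :
        Dual F (Fin 3 → F) ≃ₗ[F] (Fin 3 → F)) :
          Dual F (Fin 3 → F) →ₗ[F] (Fin 3 → F)) W.dualAnnihilator := rfl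
  have h1' : Submodule.map ((Pi.basisFun F (Fin 3)).toDualEquiv.symm :
        Dual F (Fin 3 → F) →ₗ[F] (Fin 3 → F))
      W.dualAnnihilator = Submodule.map
      (((Pi.basisFun F (Fin 3)).toDualEquiv.symm : Dual F (Fin 3 → F) ≃ₗ[F] (Fin 3 → F)) :
        Dual F (Fin 3 → F) →ₗ[F] (Fin 3 → F)) W.dualAnnihilator := by
    ext x; simp only [Submodule.mem_map, LinearEquiv.coe_coe]
  rw [h1, h1', LinearEquiv.finrank_map_eq]
  have h2 := LinearEquiv.finrank_eq (R := F) (M := (Fin 3 → F) ⧸ W)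
    (N := W.dualAnnihilator) (Subspace.quotEquivAnnihilator W)
  have h3 := Submodule.finrank_quotient_add_finrank W
  have h4 : finrank F (Fin 3 → F) = 3 := Module.finrank_fin_fun F
  omega

noncomputable def dInv (W : Submodule F (Fin 3 → F)) : Submodule F (Fin 3 → F) :=
  dIso.symm (OrderDual.toDual W)

lemma dSub_dInv (W : Submodule F (Fin 3 → F)) : dSub (dInv W) = W :=
  congrArg OrderDual.ofDual (dIso.apply_symm_apply (OrderDual.toDual W))

lemma dInv_dSub (W : Submodule F (Fin 3 → F)) : dInv (dSub W) = W :=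
  dIso.symm_apply_apply W

lemma dInv_finrank (W : Submodule F (Fin 3 → F)) :
    finrank F (dInv W) = 3 - finrank F W := by
  have := dSub_finrank (F := F) (dInv W)
  rw [dSub_dInv] at this
  have h4 : finrank F (Fin 3 → F) = 3 := Module.finrank_fin_fun F
  have h5 : finrank F (dInv W) ≤ 3 := by
    have := Submodule.finrank_le (dInv W); rwa [h4] at this
  have h6 : finrank F W ≤ 3 := by
    have := Submodule.finrank_le W; rwa [h4] at this
  omega

noncomputable def dpt : PSub F 3 1 ≃ PSub F 3 2 where
  toFun P := ⟨dSub P.1, by rw [dSub_finrank, P.2]⟩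
  invFun L := ⟨dInv L.1, by rw [dInv_finrank, L.2]⟩
  left_inv P := Subtype.ext (dInv_dSub P.1)
  right_inv L := Subtype.ext (dSub_dInv L.1)

noncomputable def dln : PSub F 3 2 ≃ PSub F 3 1 where
  toFun L := ⟨dSub L.1, by rw [dSub_finrank, L.2]⟩
  invFun P := ⟨dInv P.1, by rw [dInv_finrank, P.2]⟩
  left_inv L := Subtype.ext (dInv_dSub L.1)
  right_inv P := Subtype.ext (dSub_dInv P.1)

lemma incidence (P : PSub F 3 1) (L : PSub F 3 2) :
    P.1 ≤ L.1 ↔ (dln L).1 ≤ (dpt P).1 :=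
  (dSub_antitone P.1 L.1).symm

end Dual

section Count
set_option linter.unusedSectionVars false
variable {F : Type*} [Field F] [Fintype F]

lemma card_ne_aux {α : Type*} [Finite α] (a : α) :
    Nat.card {x : α // x ≠ a} = Nat.card α - 1 := by
  classical
  have h1 := Nat.card_congr (Equiv.sumCompl (fun x : α => x = a))
  rw [Nat.card_sum] at h1
  have h2 : Nat.card {x : α // x = a} = 1 := by
    rw [Nat.card_eq_one_iff_unique]
    exact ⟨⟨fun x y => by apply Subtype.ext; rw [x.2, y.2]⟩, ⟨⟨a, rfl⟩⟩⟩
  have h3 : Nat.card {x : α // x ≠ a} = Nat.card {x : α // ¬ x = a} := rfl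
  rw [h2] at h1
  omega

lemma card_submodule (W : Submodule F (Fin 3 → F)) :
    Nat.card W = Fintype.card F ^ finrank F W := by
  letI : Fintype W := Fintype.ofFinite _
  rw [Nat.card_eq_fintype_card, card_eq_pow_finrank (K := F) (V := W)]

lemma count_aux (W : Submodule F (Fin 3 → F)) :
    Nat.card {P : PSub F 3 1 // P.1 ≤ W} * (Fintype.card F - 1)
      = Fintype.card F ^ finrank F W - 1 := by
  classical
  letI : Fintype (PSub F 3 1) := Fintype.ofFinite _
  letI instT : Fintype {v : Fin 3 → F // v ∈ W ∧ v ≠ 0} := Fintype.ofFinite _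
  have hspanW : ∀ v : {v : Fin 3 → F // v ∈ W ∧ v ≠ 0}, Submodule.span F {v.1} ≤ W := fun v =>
    (Submodule.span_singleton_le_iff_mem _ _).2 v.2.1
  set f : {v : Fin 3 → F // v ∈ W ∧ v ≠ 0} → {P : PSub F 3 1 // P.1 ≤ W} := fun v =>
    ⟨⟨Submodule.span F {v.1}, finrank_span_singleton v.2.2⟩, hspanW v⟩ with hf
  have key : ∀ P : {P : PSub F 3 1 // P.1 ≤ W},
      Nat.card {v // f v = P} = Fintype.card F - 1 := by
    intro P
    have gbij : Function.Bijective (fun v : {v // f v = P} =>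
        (⟨⟨v.1.1, by
            have h := congrArg (fun Q => Q.1.1) v.2
            simp only [hf] at h
            exact h ▸ Submodule.mem_span_singleton_self v.1.1⟩, by
          simp only [ne_eq, Submodule.mk_eq_zero]
          exact v.1.2.2⟩ : {x : P.1.1 // x ≠ 0})) := by
      constructor
      · intro v v' h
        apply Subtype.ext; apply Subtype.ext
        exact congrArg (fun x => x.1.1) h
      · rintro ⟨⟨x, hx⟩, hx0⟩
        have hx0' : x ≠ 0 := by simpa using hx0
        have hfv : f ⟨x, ⟨P.2 hx, hx0'⟩⟩ = P := by
          apply Subtype.ext; apply Subtype.ext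
          show Submodule.span F {x} = P.1.1
          refine Submodule.eq_of_le_of_finrank_le
            ((Submodule.span_singleton_le_iff_mem _ _).2 hx) ?_
          rw [P.1.2, finrank_span_singleton hx0']
        exact ⟨⟨⟨x, ⟨P.2 hx, hx0'⟩⟩, hfv⟩, by apply Subtype.ext; apply Subtype.ext; rfl⟩
    rw [Nat.card_congr (Equiv.ofBijective _ gbij), card_ne_aux (0 : P.1.1),
      card_submodule, P.1.2, pow_one]
  have h1 : Nat.card {v : Fin 3 → F // v ∈ W ∧ v ≠ 0}
      = Nat.card {P : PSub F 3 1 // P.1 ≤ W} * (Fintype.card F - 1) := by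
    rw [Nat.card_congr (Equiv.sigmaFiberEquiv f).symm, Nat.card_eq_fintype_card,
      Fintype.card_sigma,
      Finset.sum_congr rfl (fun P _ => by
        rw [← Nat.card_eq_fintype_card (α := {v // f v = P}), key P]),
      Finset.sum_const, smul_eq_mul, Finset.card_univ, Nat.card_eq_fintype_card]
  have h2 : Nat.card {v : Fin 3 → F // v ∈ W ∧ v ≠ 0}
      = Fintype.card F ^ finrank F W - 1 := by
    have e2 : {v : Fin 3 → F // v ∈ W ∧ v ≠ 0} ≃ {x : W // x ≠ 0} :=
      { toFun := fun v => ⟨⟨v.1, v.2.1⟩, by simp only [ne_eq, Submodule.mk_eq_zero]; exact v.2.2⟩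
        invFun := fun x => ⟨x.1.1, ⟨x.1.2, by
          intro h; exact x.2 (by apply Subtype.ext; exact h)⟩⟩
        left_inv := fun v => rfl
        right_inv := fun x => rfl }
    rw [Nat.card_congr e2, card_ne_aux (0 : W), card_submodule]
  rw [← h1, h2]
end Count

section Counts2
set_option linter.unusedSectionVars false
variable {F : Type*} [Field F] [Fintype F]

lemma npoints_line (W : Submodule F (Fin 3 → F)) (hW : finrank F W = 2) :
    Nat.card {P : PSub F 3 1 // P.1 ≤ W} = Fintype.card F + 1 := by
  have h := count_aux W
  rw [hW] at h
  have hq : 1 < Fintype.card F := Fintype.one_lt_card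
  obtain ⟨r, hr⟩ : ∃ r, Fintype.card F = r + 1 := ⟨_, (Nat.succ_pred_eq_of_pos (by omega)).symm⟩
  rw [hr] at h ⊢
  have hsq : (r + 1) ^ 2 = (r + 1 + 1) * r + 1 := by ring
  rw [hsq] at h
  have h' : Nat.card {P : PSub F 3 1 // P.1 ≤ W} * r = (r + 1 + 1) * r := by
    simpa using h
  exact Nat.eq_of_mul_eq_mul_right (by omega) h'

lemma npoints_all :
    Nat.card (PSub F 3 1) = Fintype.card F ^ 2 + Fintype.card F + 1 := by
  have h := count_aux (⊤ : Submodule F (Fin 3 → F))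
  rw [Nat.card_congr (Equiv.subtypeUnivEquiv (fun P : PSub F 3 1 => le_top))] at h
  rw [finrank_top, Module.finrank_fin_fun] at h
  have hq : 1 < Fintype.card F := Fintype.one_lt_card
  obtain ⟨r, hr⟩ : ∃ r, Fintype.card F = r + 1 := ⟨_, (Nat.succ_pred_eq_of_pos (by omega)).symm⟩
  rw [hr] at h ⊢
  have hcube : (r + 1) ^ 3 = ((r + 1) ^ 2 + (r + 1) + 1) * r + 1 := by ring
  rw [hcube] at h
  have h' : Nat.card (PSub F 3 1) * r = ((r + 1) ^ 2 + (r + 1) + 1) * r := by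
    simpa using h
  exact Nat.eq_of_mul_eq_mul_right (by omega) h'

lemma nlines_point (P : PSub F 3 1) :
    Nat.card {L : PSub F 3 2 // P.1 ≤ L.1} = Fintype.card F + 1 := by
  rw [Nat.card_congr (Equiv.subtypeEquiv (q := fun Q : PSub F 3 1 => Q.1 ≤ (dpt P).1) dln (fun L => incidence P L))]
  exact npoints_line (dpt P).1 (dpt P).2

lemma nlines_all :
    Nat.card (PSub F 3 2) = Fintype.card F ^ 2 + Fintype.card F + 1 := by
  rw [Nat.card_congr (dln (F := F))]
  exact npoints_all

lemma nlines_pair (P P' : PSub F 3 1) (hPP : P ≠ P') :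
    Nat.card {L : PSub F 3 2 // P.1 ≤ L.1 ∧ P'.1 ≤ L.1} = 1 := by
  rw [Nat.card_eq_one_iff_unique]
  have hinf : P.1 ⊓ P'.1 = ⊥ := by
    by_contra hne
    have hpos : 0 < finrank F (P.1 ⊓ P'.1 : Submodule F (Fin 3 → F)) := by
      rcases Nat.eq_zero_or_pos (finrank F (P.1 ⊓ P'.1 : Submodule F (Fin 3 → F))) with h0 | h0
      · exact absurd (Submodule.finrank_eq_zero.mp h0) hne
      · exact h0
    have heq : P.1 ⊓ P'.1 = P.1 :=
      Submodule.eq_of_le_of_finrank_le inf_le_left (by rw [P.2]; omega)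
    have hPP' : P.1 ≤ P'.1 := heq ▸ inf_le_right
    exact hPP (Subtype.ext (Submodule.eq_of_le_of_finrank_eq hPP' (by rw [P.2, P'.2])))
  have hsup : finrank F (P.1 ⊔ P'.1 : Submodule F (Fin 3 → F)) = 2 := by
    have h := Submodule.finrank_sup_add_finrank_inf_eq P.1 P'.1
    rw [hinf, finrank_bot, P.2, P'.2] at h
    omega
  refine ⟨⟨fun L L' => ?_⟩, ⟨⟨⟨P.1 ⊔ P'.1, hsup⟩, le_sup_left, le_sup_right⟩⟩⟩
  have e1 : P.1 ⊔ P'.1 = L.1.1 :=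
    Submodule.eq_of_le_of_finrank_eq (sup_le L.2.1 L.2.2) (by rw [hsup, L.1.2])
  have e2 : P.1 ⊔ P'.1 = L'.1.1 :=
    Submodule.eq_of_le_of_finrank_eq (sup_le L'.2.1 L'.2.2) (by rw [hsup, L'.1.2])
  exact Subtype.ext (Subtype.ext (e1.symm.trans e2))

end Counts2

section Sums
open scoped Classical
set_option linter.unusedSectionVars false
variable {F : Type*} [Field F] [Fintype F]

noncomputable instance psubFintype (k : ℕ) : Fintype (PSub F 3 k) := Fintype.ofFinite _

lemma sum_ite_const {α : Type*} [Fintype α] (p : α → Prop) [DecidablePred p] (c : ℕ) :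
    (∑ x : α, if p x then c else 0) = Nat.card {x // p x} * c := by
  classical
  rw [← Finset.sum_filter, Finset.sum_const, smul_eq_mul, Nat.card_eq_fintype_card,
    Fintype.card_subtype]

lemma pmult_eq_sum (K : PSub F 3 1 → ℕ) (S : Submodule F (Fin 3 → F)) :
    pmult K S = ∑ P : PSub F 3 1, if P.1 ≤ S then K P else 0 := by
  classical
  unfold pmult
  rw [finsum_eq_sum_of_fintype]
  exact Finset.sum_congr rfl fun P _ => finsum_eq_if

lemma pcard_eq_sum (K : PSub F 3 1 → ℕ) : pcard K = ∑ P : PSub F 3 1, K P :=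
  finsum_eq_sum_of_fintype K
end Sums

section Main
set_option linter.unusedSectionVars false
open scoped Classical
variable {F : Type*} [Field F] [Fintype F]

lemma sum_all_lines (K : PSub F 3 1 → ℕ) :
    ∑ L : PSub F 3 2, pmult K L.1 = (Fintype.card F + 1) * pcard K := by
  classical
  simp_rw [pmult_eq_sum]
  rw [Finset.sum_comm, pcard_eq_sum, Finset.mul_sum]
  refine Finset.sum_congr rfl (fun P _ => ?_)
  rw [sum_ite_const (fun L : PSub F 3 2 => P.1 ≤ L.1) (K P), nlines_point P]

lemma sum_lines_through (K : PSub F 3 1 → ℕ) (P0 : PSub F 3 1) :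
    ∑ L : PSub F 3 2, (if P0.1 ≤ L.1 then pmult K L.1 else 0)
      = Fintype.card F * K P0 + pcard K := by
  classical
  have step1 : ∀ L : PSub F 3 2, (if P0.1 ≤ L.1 then pmult K L.1 else 0)
      = ∑ P : PSub F 3 1, if P0.1 ≤ L.1 ∧ P.1 ≤ L.1 then K P else 0 := by
    intro L
    rw [pmult_eq_sum]
    split_ifs with h
    · exact Finset.sum_congr rfl fun P _ => by simp [h]
    · exact (Finset.sum_eq_zero fun P _ => by simp [h]).symm
  simp_rw [step1]
  rw [Finset.sum_comm]
  have step2 : ∀ P : PSub F 3 1,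
      (∑ L : PSub F 3 2, if P0.1 ≤ L.1 ∧ P.1 ≤ L.1 then K P else 0)
        = K P + (if P = P0 then Fintype.card F * K P else 0) := by
    intro P
    rw [sum_ite_const (fun L : PSub F 3 2 => P0.1 ≤ L.1 ∧ P.1 ≤ L.1) (K P)]
    by_cases hP : P = P0
    · subst hP
      have hc : Nat.card {L : PSub F 3 2 // P.1 ≤ L.1 ∧ P.1 ≤ L.1}
          = Fintype.card F + 1 := by
        rw [Nat.card_congr (Equiv.subtypeEquivRight
          (fun L : PSub F 3 2 => by constructor <;> (intro h; first | exact h.1 | exact ⟨h, h⟩)))]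
        exact nlines_point P
      rw [hc, if_pos rfl]
      ring
    · rw [nlines_pair P0 P (fun h => hP h.symm)]
      simp [hP]
  simp_rw [step2]
  rw [Finset.sum_add_distrib, Finset.sum_ite_eq' Finset.univ P0
    (fun P => Fintype.card F * K P)]
  simp only [Finset.mem_univ, if_pos, pcard_eq_sum]
  omega

lemma sum_reindex (g : PSub F 3 2 → ℕ) :
    ∑ Q : PSub F 3 1, g (dpt Q) = ∑ L : PSub F 3 2, g L :=
  Fintype.sum_equiv dpt _ _ (fun _ => rfl)

lemma sum_reindex_cond (g : PSub F 3 2 → ℕ) (M0 : PSub F 3 2) :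
    ∑ Q : PSub F 3 1, (if Q.1 ≤ M0.1 then g (dpt Q) else 0)
      = ∑ L : PSub F 3 2, (if (dln M0).1 ≤ L.1 then g L else 0) := by
  classical
  exact Fintype.sum_equiv dpt _ _ (fun Q => if_congr (incidence Q M0) rfl rfl)

end Main

lemma nlines_all' {F : Type*} [Field F] [Fintype F] :
    Fintype.card (PSub F 3 2) = Fintype.card F ^ 2 + Fintype.card F + 1 := by
  have h := nlines_all (F := F)
  rwa [Nat.card_eq_fintype_card] at h

lemma npoints_all' {F : Type*} [Field F] [Fintype F] :
    Fintype.card (PSub F 3 1) = Fintype.card F ^ 2 + Fintype.card F + 1 := by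
  have h := npoints_all (F := F)
  rwa [Nat.card_eq_fintype_card] at h

/-- A strong `(t mod q)`-arc of cardinality `m*q + t` exists in `PG(2,q)` if
and only if there exists an arc `B` in `PG(2,q)` of cardinality
`(m - t)*q + m` whose line multiplicities all lie in `{m-t, ..., m}`. -/
theorem stmt4 {F : Type*} [Field F] [Fintype F] (q : ℕ) (hq : Fintype.card F = q)
    (t m : ℕ) (ht1 : 1 ≤ t) (ht2 : t ≤ q - 1) (hm : t ≤ m) :
    (∃ K : PSub F 3 1 → ℕ,
      (∀ L : PSub F 3 2, pmult K L.1 ≡ t [MOD q]) ∧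
      (∀ P : PSub F 3 1, K P ≤ t) ∧
      pcard K = m * q + t) ↔
    (∃ B : PSub F 3 1 → ℕ,
      pcard B = (m - t) * q + m ∧
      ∀ L : PSub F 3 2, m - t ≤ pmult B L.1 ∧ pmult B L.1 ≤ m) := by
  subst hq
  classical
  have hq2 : 1 < Fintype.card F := Fintype.one_lt_card
  obtain ⟨s, rfl⟩ : ∃ s, m = s + t := ⟨m - t, by omega⟩
  have hst : s + t - t = s := by omega
  have htq : t < Fintype.card F := by omega
  constructor
  · rintro ⟨K, hmod, hbnd, hcard⟩
    set a : PSub F 3 2 → ℕ := fun L => pmult K L.1 / Fintype.card F with ha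
    have hmod' : ∀ L : PSub F 3 2, pmult K L.1 % Fintype.card F = t := by
      intro L
      have h := hmod L
      rwa [Nat.ModEq, Nat.mod_eq_of_lt htq] at h
    have hKline : ∀ L : PSub F 3 2, pmult K L.1 = Fintype.card F * a L + t := by
      intro L
      have h := Nat.div_add_mod (pmult K L.1) (Fintype.card F)
      rw [hmod' L] at h
      exact h.symm
    refine ⟨fun Q => a (dpt Q), ?_, ?_⟩
    · rw [pcard_eq_sum, sum_reindex a]
      have hsum := sum_all_lines K
      have hsum' : ∑ L : PSub F 3 2, pmult K L.1
          = Fintype.card F * (∑ L : PSub F 3 2, a L)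
            + (Fintype.card F ^ 2 + Fintype.card F + 1) * t := by
        rw [Finset.sum_congr rfl (fun L _ => hKline L), Finset.sum_add_distrib,
          ← Finset.mul_sum, Finset.sum_const, smul_eq_mul, Finset.card_univ, nlines_all']
      rw [hsum', hcard] at hsum
      have key : Fintype.card F * (∑ L : PSub F 3 2, a L)
          = Fintype.card F * (s * Fintype.card F + (s + t)) := by
        have hr : (Fintype.card F + 1) * ((s + t) * Fintype.card F + t)
            = Fintype.card F * (s * Fintype.card F + (s + t))
              + (Fintype.card F ^ 2 + Fintype.card F + 1) * t := by ring
        rw [hr] at hsum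
        exact Nat.add_right_cancel hsum
      have hX := Nat.eq_of_mul_eq_mul_left (by omega) key
      rw [hX, hst]
    · intro M0
      have e1 : pmult (fun Q => a (dpt Q)) M0.1
          = ∑ L : PSub F 3 2, (if (dln M0).1 ≤ L.1 then a L else 0) := by
        rw [pmult_eq_sum]
        exact sum_reindex_cond a M0
      have e2 : ∑ L : PSub F 3 2, (if (dln M0).1 ≤ L.1 then pmult K L.1 else 0)
          = Fintype.card F * (∑ L : PSub F 3 2, (if (dln M0).1 ≤ L.1 then a L else 0))
            + (Fintype.card F + 1) * t := by
        have h1 : ∀ L : PSub F 3 2, (if (dln M0).1 ≤ L.1 then pmult K L.1 else 0)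
            = Fintype.card F * (if (dln M0).1 ≤ L.1 then a L else 0)
              + (if (dln M0).1 ≤ L.1 then t else 0) := by
          intro L
          split_ifs with h
          · rw [hKline L]
          · simp
        rw [Finset.sum_congr rfl (fun L _ => h1 L), Finset.sum_add_distrib,
          ← Finset.mul_sum, sum_ite_const (fun L : PSub F 3 2 => (dln M0).1 ≤ L.1) t,
          nlines_point (dln M0)]
      have e3 := sum_lines_through K (dln M0)
      rw [e2, hcard] at e3
      have key2 : pmult (fun Q => a (dpt Q)) M0.1 = K (dln M0) + s := by
        have hr : Fintype.card F * K (dln M0) + ((s + t) * Fintype.card F + t)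
            = Fintype.card F * (K (dln M0) + s) + (Fintype.card F + 1) * t := by ring
        rw [hr] at e3
        have := Nat.add_right_cancel e3
        rw [e1]
        exact Nat.eq_of_mul_eq_mul_left (by omega) this
      have hKb := hbnd (dln M0)
      constructor
      · rw [hst]; omega
      · omega
  · rintro ⟨B, hBcard, hBL⟩
    rw [hst] at hBcard
    have hBL' : ∀ M : PSub F 3 2, s ≤ pmult B M.1 ∧ pmult B M.1 ≤ s + t := by
      intro M
      have := hBL M
      rwa [hst] at this
    set K : PSub F 3 1 → ℕ := fun P => pmult B (dpt P).1 - s with hK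
    have hKval : ∀ L : PSub F 3 2, pmult K L.1 = Fintype.card F * B (dln L) + t := by
      intro L
      have e1 : pmult K L.1
          = ∑ M : PSub F 3 2, (if (dln L).1 ≤ M.1 then pmult B M.1 - s else 0) := by
        rw [pmult_eq_sum]
        exact sum_reindex_cond (fun M => pmult B M.1 - s) L
      have h1 : ∀ M : PSub F 3 2, (if (dln L).1 ≤ M.1 then pmult B M.1 - s else 0)
          + (if (dln L).1 ≤ M.1 then s else 0)
          = (if (dln L).1 ≤ M.1 then pmult B M.1 else 0) := by
        intro M
        split_ifs with h
        · exact Nat.sub_add_cancel (hBL' M).1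
        · simp
      have e2 : (∑ M : PSub F 3 2, (if (dln L).1 ≤ M.1 then pmult B M.1 - s else 0))
          + (∑ M : PSub F 3 2, (if (dln L).1 ≤ M.1 then s else 0))
          = ∑ M : PSub F 3 2, (if (dln L).1 ≤ M.1 then pmult B M.1 else 0) := by
        rw [← Finset.sum_add_distrib]
        exact Finset.sum_congr rfl fun M _ => h1 M
      rw [sum_ite_const (fun M : PSub F 3 2 => (dln L).1 ≤ M.1) s,
        nlines_point (dln L)] at e2
      rw [sum_lines_through B (dln L), hBcard] at e2
      rw [e1]
      have hr : Fintype.card F * B (dln L) + (s * Fintype.card F + (s + t))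
          = (Fintype.card F * B (dln L) + t) + (Fintype.card F + 1) * s := by ring
      rw [hr] at e2
      exact Nat.add_right_cancel e2
    refine ⟨K, ?_, ?_, ?_⟩
    · intro L
      rw [hKval L]
      show _ % _ = _ % _
      simp [Nat.mul_add_mod]
    · intro P
      have := hBL' (dpt P)
      simp only [hK]
      omega
    · rw [pcard_eq_sum]
      have h1 : ∀ P : PSub F 3 1, K P + s = pmult B (dpt P).1 := fun P =>
        Nat.sub_add_cancel (hBL' (dpt P)).1
      have h2 : (∑ P : PSub F 3 1, (K P + s)) = ∑ L : PSub F 3 2, pmult B L.1 := by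
        rw [← sum_reindex (fun L => pmult B L.1)]
        exact Finset.sum_congr rfl fun P _ => h1 P
      rw [Finset.sum_add_distrib, Finset.sum_const, smul_eq_mul, Finset.card_univ,
        npoints_all', sum_all_lines B, hBcard] at h2
      have hr : (Fintype.card F + 1) * (s * Fintype.card F + (s + t))
          = ((s + t) * Fintype.card F + t)
            + (Fintype.card F ^ 2 + Fintype.card F + 1) * s := by ring
      rw [hr] at h2
      exact Nat.add_right_cancel h2
end

section
/- Let q be a prime power, v ≥ 2, and 1 ≤ t ≤ q − 1. Every (t mod q)-arc K in PG(v−1,q) satisfies #K ≥ [v−1]_q · t, where [k]_q = (q^k − 1)/(q − 1). -/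
open Module

section helpers

variable {F : Type*} [Field F]

instance fin_submodule {V : Type*} [AddCommGroup V] [Module F V] [Finite V] :
    Finite (Submodule F V) :=
  Finite.of_injective (fun S => (S : Set V)) SetLike.coe_injective

/-- nonzero vectors ≃ sigma of points and nonzero vectors of them -/
noncomputable def pointsEquiv (V : Type*) [AddCommGroup V] [Module F V]
    [FiniteDimensional F V] :
    {x : V // x ≠ 0} ≃ Σ P : {P : Submodule F V // finrank F P = 1}, {y : P.1 // y ≠ 0} where
  toFun x := ⟨⟨Submodule.span F {x.1}, finrank_span_singleton x.2⟩,
    ⟨x.1, Submodule.mem_span_singleton_self x.1⟩, by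
      simpa [Subtype.ext_iff] using x.2⟩
  invFun s := ⟨s.2.1.1, fun h => s.2.2 (Subtype.ext h)⟩
  left_inv x := rfl
  right_inv s := by
    obtain ⟨⟨P, hP⟩, ⟨y, hy⟩, hy0⟩ := s
    have hyne : y ≠ 0 := fun h => hy0 (by simp [Subtype.ext_iff, h])
    have h1 : Submodule.span F {y} = P := by
      apply Submodule.eq_of_le_of_finrank_le
      · simpa [Submodule.span_le] using hy
      · rw [hP, finrank_span_singleton hyne]
    subst h1
    rfl

lemma card_points_mul (V : Type*) [AddCommGroup V] [Module F V] [Fintype V] [Fintype F]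
    [Fintype {P : Submodule F V // finrank F P = 1}] :
    Fintype.card {P : Submodule F V // finrank F P = 1} * (Fintype.card F - 1)
      = Fintype.card V - 1 := by
  classical
  have e := pointsEquiv (F := F) V
  have h1 : Fintype.card {x : V // x ≠ 0} = Fintype.card V - 1 := by
    simpa using Fintype.card_subtype_ne (0 : V)
  rw [Fintype.card_congr e, Fintype.card_sigma] at h1
  have hpt : ∀ P : {P : Submodule F V // finrank F P = 1},
      Fintype.card {y : P.1 // y ≠ 0} = Fintype.card F - 1 := by
    intro P
    obtain ⟨el⟩ := FiniteDimensional.nonempty_linearEquiv_of_finrank_eq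
      (by rw [P.2, finrank_self] : finrank F P.1 = finrank F F)
    have e2 : {y : P.1 // y ≠ 0} ≃ {z : F // z ≠ 0} :=
      Equiv.subtypeEquiv el.toEquiv (by
        intro a
        simp [LinearEquiv.map_eq_zero_iff])
    rw [Fintype.card_congr e2]
    simpa using Fintype.card_subtype_ne (0 : F)
  rw [← h1, Finset.sum_congr rfl (fun P _ => hpt P), Finset.sum_const, Finset.card_univ,
    smul_eq_mul]

end helpers

section lines
variable {F : Type*} [Field F] {V : Type*} [AddCommGroup V] [Module F V]
  [FiniteDimensional F V]

lemma finrank_map_mkQ (P0 L : Submodule F V) (h : P0 ≤ L) :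
    finrank F (L.map P0.mkQ) + finrank F P0 = finrank F L := by
  have h2 := LinearMap.finrank_range_add_finrank_ker (P0.mkQ.comp L.subtype)
  rw [LinearMap.range_comp, Submodule.range_subtype, LinearMap.ker_comp,
    Submodule.ker_mkQ] at h2
  rw [← h2, (Submodule.comapSubtypeEquivOfLe h).finrank_eq]

/-- lines through a point `P0` correspond to points of the quotient. -/
noncomputable def linesThruEquiv (P0 : Submodule F V) (h1 : finrank F P0 = 1) :
    {L : Submodule F V // finrank F L = 2 ∧ P0 ≤ L} ≃
      {Q : Submodule F (V ⧸ P0) // finrank F Q = 1} where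
  toFun L := ⟨L.1.map P0.mkQ, by
    have h2 := finrank_map_mkQ P0 L.1 L.2.2
    rw [h1, L.2.1] at h2
    omega⟩
  invFun Q := ⟨Q.1.comap P0.mkQ, by
    have hle : P0 ≤ Q.1.comap P0.mkQ := by
      intro x hx
      simp [Submodule.mem_comap, Submodule.mkQ_apply, (Submodule.Quotient.mk_eq_zero P0).2 hx]
    have h2 := finrank_map_mkQ P0 (Q.1.comap P0.mkQ) hle
    rw [Submodule.map_comap_eq_of_surjective P0.mkQ_surjective, Q.2, h1] at h2
    exact ⟨h2.symm, hle⟩⟩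
  left_inv L := by
    ext1
    dsimp only
    rw [Submodule.comap_map_eq, Submodule.ker_mkQ, sup_eq_left.2 L.2.2]
  right_inv Q := by
    ext1
    exact Submodule.map_comap_eq_of_surjective P0.mkQ_surjective Q.1

end lines


/-- Every `(t mod q)`-arc `K` in `PG(v-1,q)`, `v ≥ 2`, `1 ≤ t ≤ q - 1`,
satisfies `#K ≥ [v-1]_q * t`, where `[k]_q = (q^k - 1)/(q - 1)`. -/
theorem stmt8 {F : Type*} [Field F] [Fintype F] (q : ℕ) (hq : Fintype.card F = q)
    {v : ℕ} (hv : 2 ≤ v) (t : ℕ) (ht1 : 1 ≤ t) (ht2 : t ≤ q - 1)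
    (K : PSub F v 1 → ℕ)
    (hK : ∀ L : PSub F v 2, pmult K L.1 ≡ t [MOD q]) :
    (q ^ (v - 1) - 1) / (q - 1) * t ≤ pcard K := by
  classical
  have hq2 : 2 ≤ q := hq ▸ Fintype.one_lt_card
  letI : Fintype (Submodule F (Fin v → F)) := Fintype.ofFinite _
  letI : Fintype (PSub F v 1) := Fintype.ofFinite _
  letI : Fintype (PSub F v 2) := Fintype.ofFinite _
  have hqpos : 0 < q - 1 := by omega
  have hpcard : pcard K = ∑ P : PSub F v 1, K P := finsum_eq_sum_of_fintype _
  have hpmult : ∀ S : Submodule F (Fin v → F),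
      pmult K S = ∑ P ∈ Finset.univ.filter (fun P : PSub F v 1 => P.1 ≤ S), K P := by
    intro S
    rw [pmult, finsum_eq_sum_of_fintype, Finset.sum_filter]
    exact Finset.sum_congr rfl fun P _ => finsum_eq_if
  have hline : ∀ L : PSub F v 2, t ≤ pmult K L.1 := by
    intro L
    have h := (hK L).symm
    have ht : t % q = t := Nat.mod_eq_of_lt (by omega)
    calc t = pmult K L.1 % q := by rw [← ht]; exact h
      _ ≤ pmult K L.1 := Nat.mod_le _ _
  have hdvd : (q - 1) ∣ q ^ (v - 1) - 1 := by
    simpa using Nat.sub_dvd_pow_sub_pow q 1 (v - 1)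
  have hrhs : (q ^ (v - 1) - 1) / (q - 1) * t ≤ q ^ (v - 1) - 1 := by
    calc (q ^ (v - 1) - 1) / (q - 1) * t ≤ (q ^ (v - 1) - 1) / (q - 1) * (q - 1) :=
          Nat.mul_le_mul_left _ ht2
      _ = q ^ (v - 1) - 1 := Nat.div_mul_cancel hdvd
  have hp1 : 1 ≤ q ^ (v - 1) := Nat.one_le_pow _ _ (by omega)
  by_cases hA : ∀ P : PSub F v 1, K P ≠ 0
  · have hcard : Fintype.card (PSub F v 1) * (q - 1) = q ^ v - 1 := by
      have h := card_points_mul (F := F) (Fin v → F)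
      rwa [Fintype.card_fun, Fintype.card_fin, hq] at h
    have h2 : q ^ (v - 1) - 1 ≤ Fintype.card (PSub F v 1) := by
      have e1 : (q ^ (v - 1) - 1) * q = q ^ v - q := by
        rw [Nat.sub_mul, one_mul, ← pow_succ]
        congr 2
        omega
      have h3 : (q ^ (v - 1) - 1) * (q - 1) ≤ Fintype.card (PSub F v 1) * (q - 1) := by
        rw [hcard]
        calc (q ^ (v - 1) - 1) * (q - 1) ≤ (q ^ (v - 1) - 1) * q :=
              Nat.mul_le_mul_left _ (by omega)
          _ = q ^ v - q := e1
          _ ≤ q ^ v - 1 := by omega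
      exact Nat.le_of_mul_le_mul_right h3 hqpos
    calc (q ^ (v - 1) - 1) / (q - 1) * t ≤ q ^ (v - 1) - 1 := hrhs
      _ ≤ Fintype.card (PSub F v 1) := h2
      _ = ∑ _P : PSub F v 1, 1 := by simp
      _ ≤ ∑ P : PSub F v 1, K P :=
          Finset.sum_le_sum fun P _ => Nat.one_le_iff_ne_zero.2 (hA P)
      _ = pcard K := hpcard.symm
  · push_neg at hA
    obtain ⟨P0, hP0⟩ := hA
    set LT := {L : Submodule F (Fin v → F) // finrank F L = 2 ∧ P0.1 ≤ L} with hLTdef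
    letI : Fintype ((Fin v → F) ⧸ P0.1) := Fintype.ofFinite _
    letI : Fintype {Q : Submodule F ((Fin v → F) ⧸ P0.1) // finrank F Q = 1} :=
      Fintype.ofFinite _
    letI : Fintype LT := Fintype.ofFinite _
    have hfq : finrank F ((Fin v → F) ⧸ P0.1) = v - 1 := by
      have h := Submodule.finrank_quotient_add_finrank P0.1
      rw [P0.2, Module.finrank_fin_fun] at h
      omega
    have hcardq : Fintype.card ((Fin v → F) ⧸ P0.1) = q ^ (v - 1) := by
      rw [card_eq_pow_finrank (K := F), hq, hfq]
    have hLT : Fintype.card LT * (q - 1) = q ^ (v - 1) - 1 := by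
      rw [Fintype.card_congr (linesThruEquiv P0.1 P0.2)]
      have h := card_points_mul (F := F) ((Fin v → F) ⧸ P0.1)
      rwa [hcardq, hq] at h
    have hLTcard : Fintype.card LT = (q ^ (v - 1) - 1) / (q - 1) := by
      rw [← hLT, Nat.mul_div_cancel _ hqpos]
    have hne : Nonempty LT := by
      rw [← Fintype.card_pos_iff, hLTcard]
      have h1q : q - 1 ≤ q ^ (v - 1) - 1 := by
        have : q ≤ q ^ (v - 1) := by
          calc q = q ^ 1 := (pow_one q).symm
            _ ≤ q ^ (v - 1) := Nat.pow_le_pow_right (by omega) (by omega)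
        omega
      exact Nat.div_pos h1q hqpos
    -- the sup of P0 with another point is a line
    have hsup : ∀ Q : PSub F v 1, Q ≠ P0 →
        finrank F ((P0.1 ⊔ Q.1 : Submodule F (Fin v → F)) : Submodule F (Fin v → F)) = 2 := by
      intro Q hQ
      have hinf : P0.1 ⊓ Q.1 = ⊥ := by
        by_contra h
        obtain ⟨x, hx, hx0⟩ := Submodule.exists_mem_ne_zero_of_ne_bot h
        have hsp : finrank F (Submodule.span F {x}) = 1 := finrank_span_singleton hx0
        have h1 : Submodule.span F {x} = P0.1 :=
          Submodule.eq_of_le_of_finrank_le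
            (by simpa [Submodule.span_le] using hx.1) (by rw [P0.2, hsp])
        have h2 : Submodule.span F {x} = Q.1 :=
          Submodule.eq_of_le_of_finrank_le
            (by simpa [Submodule.span_le] using hx.2) (by rw [Q.2, hsp])
        exact hQ (Subtype.ext (h2.symm.trans h1))
      have h := Submodule.finrank_sup_add_finrank_inf_eq P0.1 Q.1
      rw [hinf, finrank_bot, P0.2, Q.2] at h
      omega
    have hun : ∀ (Q : PSub F v 1), Q ≠ P0 → ∀ L : LT, Q.1 ≤ L.1 → P0.1 ⊔ Q.1 = L.1 := by
      intro Q hQ L hle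
      exact Submodule.eq_of_le_of_finrank_le (sup_le L.2.2 hle)
        (by rw [L.2.1, hsup Q hQ])
    -- total fiber map
    let g : PSub F v 1 → LT := fun Q =>
      if h : finrank F ((P0.1 ⊔ Q.1 : Submodule F (Fin v → F)) : Submodule F (Fin v → F)) = 2
      then ⟨P0.1 ⊔ Q.1, h, le_sup_left⟩ else Classical.arbitrary _
    have hgne : ∀ Q : PSub F v 1, Q ≠ P0 → (g Q).1 = P0.1 ⊔ Q.1 := by
      intro Q hQ
      simp only [g, dif_pos (hsup Q hQ)]
    have hfiber : ∀ L : LT,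
        pmult K L.1 = ∑ Q ∈ (Finset.univ.erase P0).filter (fun Q => g Q = L), K Q := by
      intro L
      rw [hpmult L.1]
      refine (Finset.sum_subset ?_ ?_).symm
      · intro Q hQmem
        simp only [Finset.mem_filter, Finset.mem_erase, Finset.mem_univ, true_and,
          and_true] at hQmem ⊢
        obtain ⟨hQne, hgQ⟩ := hQmem
        have := hgne Q hQne
        rw [hgQ] at this
        exact le_trans le_sup_right this.symm.le
      · intro Q hQmem hQnot
        simp only [Finset.mem_filter, Finset.mem_univ, true_and] at hQmem
        simp only [Finset.mem_filter, Finset.mem_erase, Finset.mem_univ, true_and,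
          and_true, not_and] at hQnot
        by_cases hQP : Q = P0
        · rw [hQP, hP0]
        · exact absurd (Subtype.ext ((hgne Q hQP).trans (hun Q hQP L hQmem)))
            (hQnot hQP)
    have hfibersum : ∑ L : LT, ∑ Q ∈ (Finset.univ.erase P0).filter (fun Q => g Q = L), K Q
        = ∑ Q ∈ Finset.univ.erase P0, K Q :=
      Finset.sum_fiberwise_of_maps_to (fun Q _ => Finset.mem_univ _) _
    calc (q ^ (v - 1) - 1) / (q - 1) * t
        = Fintype.card LT * t := by rw [hLTcard]
      _ = (Finset.univ : Finset LT).card * t := by rw [Finset.card_univ]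
      _ ≤ ∑ L : LT, pmult K L.1 := by
          have := Finset.card_nsmul_le_sum (Finset.univ : Finset LT)
            (fun L => pmult K L.1) t (fun L _ => hline ⟨L.1, L.2.1⟩)
          simpa [smul_eq_mul] using this
      _ = ∑ Q ∈ Finset.univ.erase P0, K Q := by
          rw [Finset.sum_congr rfl fun L _ => hfiber L, hfibersum]
      _ ≤ ∑ Q : PSub F v 1, K Q :=
          Finset.sum_le_sum_of_subset (Finset.erase_subset _ _)
      _ = pcard K := hpcard.symm
end

section
/- Let q be a prime power, v ≥ 2, and 1 ≤ t ≤ q − 1. Every (t mod q)-arc K in PG(v−1,q) of cardinality exactly [v−1]_q · t is a sum of t hyperplanes: there exist hyperplanes H_1, …, H_t (not necessarily distinct) such that K(P) = #{i ∈ {1,…,t} : P lies in H_i} for every point P. -/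
open Module

namespace Stmt10

noncomputable instance instFinSub {F : Type*} [Field F] [Fintype F] {v : ℕ} :
    Fintype (Submodule F (Fin v → F)) :=
  Fintype.ofFinite _

noncomputable instance instFinPSub {F : Type*} [Field F] [Fintype F] {v k : ℕ} :
    Fintype (PSub F v k) := by
  classical exact Fintype.ofFinite _

variable {F : Type*} [Field F] [Fintype F] {v : ℕ}

/-- `θ q k = 1 + q + ... + q^(k-1)`. -/
def θ (q k : ℕ) : ℕ := ∑ i ∈ Finset.range k, q ^ i

lemma theta_mul (q k : ℕ) (hq : 1 ≤ q) : (q - 1) * θ q k + 1 = q ^ k := by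
  induction k with
  | zero => simp [θ]
  | succ n ih =>
      have h : θ q (n+1) = θ q n + q ^ n := by
        simp [θ, Finset.sum_range_succ]
      have hqn : 1 ≤ q ^ n := Nat.one_le_pow _ _ hq
      obtain ⟨r, rfl⟩ : ∃ r, q = r + 1 := ⟨q - 1, by omega⟩
      simp only [Nat.add_sub_cancel] at *
      rw [h, pow_succ]
      nlinarith [ih]

lemma theta_succ (q k : ℕ) : θ q (k+1) = q * θ q k + 1 := by
  simp [θ, geom_sum_succ]

lemma theta_add_pow (q k : ℕ) : θ q (k+1) = θ q k + q ^ k := by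
  simp [θ, Finset.sum_range_succ]

open Classical in
noncomputable def ptsIn (S : Submodule F (Fin v → F)) : Finset (PSub F v 1) :=
  Finset.univ.filter (fun P => P.1 ≤ S)

lemma mem_ptsIn {S : Submodule F (Fin v → F)} {P : PSub F v 1} :
    P ∈ ptsIn S ↔ P.1 ≤ S := by
  classical simp [ptsIn]

lemma pmult_eq (K : PSub F v 1 → ℕ) (S : Submodule F (Fin v → F)) :
    pmult K S = ∑ P ∈ ptsIn S, K P := by
  classical
  rw [pmult, finsum_eq_sum_of_fintype, ptsIn, Finset.sum_filter]
  apply Finset.sum_congr rfl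
  intro P _
  rw [finsum_eq_if]

lemma pcard_eq (K : PSub F v 1 → ℕ) : pcard K = ∑ P : PSub F v 1, K P := by
  rw [pcard, finsum_eq_sum_of_fintype]

lemma pcard_eq_pmult_top (K : PSub F v 1 → ℕ) : pcard K = pmult K ⊤ := by
  classical
  rw [pcard_eq, pmult_eq]
  apply (Finset.sum_subset _ _).symm
  · intro x _; exact Finset.mem_univ x
  · intro x _ hx
    exact absurd (mem_ptsIn.mpr le_top) hx


lemma nat_card_submodule (S : Submodule F (Fin v → F)) {k : ℕ} (h : finrank F S = k) :
    Nat.card S = Fintype.card F ^ k := by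
  have : Fintype S := Fintype.ofFinite _
  rw [Nat.card_eq_fintype_card, card_eq_pow_finrank (K := F), h]

open Classical in
/-- The nonzero vectors in a submodule, as a finset. -/
noncomputable def nzIn (S : Submodule F (Fin v → F)) : Finset (Fin v → F) :=
  Finset.univ.filter (fun x => x ∈ S ∧ x ≠ 0)

lemma mem_nzIn {S : Submodule F (Fin v → F)} {x : Fin v → F} :
    x ∈ nzIn S ↔ x ∈ S ∧ x ≠ 0 := by
  classical simp [nzIn]

lemma card_nzIn (S : Submodule F (Fin v → F)) {k : ℕ} (h : finrank F S = k) :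
    (nzIn S).card = Fintype.card F ^ k - 1 := by
  classical
  have h1 : nzIn S = ((Finset.univ.filter (fun x : Fin v → F => x ∈ S)).erase 0) := by
    ext x
    simp only [mem_nzIn, Finset.mem_erase, Finset.mem_filter, Finset.mem_univ, true_and]
    tauto
  have h2 : (Finset.univ.filter (fun x : Fin v → F => x ∈ S)).card
      = Fintype.card F ^ k := by
    rw [← Fintype.card_subtype, Fintype.card_eq_nat_card]
    exact nat_card_submodule S h
  rw [h1, Finset.card_erase_of_mem (by simp [S.zero_mem]), h2]

lemma psub_eq {k : ℕ} {P Q : PSub F v k} (h : P.1 ≤ Q.1) : P = Q := by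
  apply Subtype.ext
  exact Submodule.eq_of_le_of_finrank_le h (by rw [P.2, Q.2])

open Finset in
lemma card_ptsIn (S : Submodule F (Fin v → F)) {k : ℕ} (h : finrank F S = k) :
    (ptsIn S).card = θ (Fintype.card F) k := by
  classical
  set q := Fintype.card F with hq
  have hq2 : 2 ≤ q := Fintype.one_lt_card
  -- the nonzero vectors of S are the disjoint union of the nonzero vectors of its points
  have key : nzIn S = (ptsIn S).biUnion (fun P => nzIn P.1) := by
    ext x
    simp only [Finset.mem_biUnion, mem_nzIn]
    constructor
    · rintro ⟨hxS, hx0⟩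
      refine ⟨⟨Submodule.span F {x}, finrank_span_singleton hx0⟩, ?_, ?_, hx0⟩
      · exact mem_ptsIn.mpr ((Submodule.span_singleton_le_iff_mem x S).mpr hxS)
      · exact Submodule.mem_span_singleton_self x
    · rintro ⟨P, hP, hxP, hx0⟩
      exact ⟨mem_ptsIn.mp hP hxP, hx0⟩
  have hdisj : ∀ P ∈ ptsIn S, ∀ Q ∈ ptsIn S, P ≠ Q →
      Disjoint (nzIn P.1)
        (nzIn Q.1) := by
    intro P _ Q _ hPQ
    rw [Finset.disjoint_left]
    rintro x hx hx'
    rw [mem_nzIn] at hx hx'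
    apply hPQ
    have e1 : Submodule.span F {x} = P.1 := by
      apply Submodule.eq_of_le_of_finrank_le
        ((Submodule.span_singleton_le_iff_mem x P.1).mpr hx.1)
      rw [P.2, finrank_span_singleton hx.2]
    have e2 : Submodule.span F {x} = Q.1 := by
      apply Submodule.eq_of_le_of_finrank_le
        ((Submodule.span_singleton_le_iff_mem x Q.1).mpr hx'.1)
      rw [Q.2, finrank_span_singleton hx'.2]
    exact Subtype.ext (e1 ▸ e2)
  have hcount : ∀ P : PSub F v 1,
      (nzIn P.1).card = q - 1 := by
    intro P
    rw [card_nzIn P.1 P.2, pow_one]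
  have := congrArg Finset.card key
  rw [card_nzIn S h, Finset.card_biUnion hdisj] at this
  rw [Finset.sum_congr rfl (fun P _ => hcount P), Finset.sum_const, smul_eq_mul] at this
  -- this : q ^ k - 1 = (ptsIn S).card * (q - 1)
  have hm := theta_mul q k (by omega)
  have hp : 1 ≤ q ^ k := Nat.one_le_pow _ _ (by omega)
  rw [mul_comm] at this
  have e : q ^ k - 1 = (q - 1) * θ q k := by rw [← hm, Nat.add_sub_cancel]
  have h4 := this.symm.trans e
  exact Nat.eq_of_mul_eq_mul_left (by omega) h4


open Classical in
/-- The lines inside `S` through the point `P`. -/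
noncomputable def linesIn (S : Submodule F (Fin v → F)) (P : PSub F v 1) :
    Finset (PSub F v 2) :=
  Finset.univ.filter (fun L => P.1 ≤ L.1 ∧ L.1 ≤ S)

lemma mem_linesIn {S : Submodule F (Fin v → F)} {P : PSub F v 1} {L : PSub F v 2} :
    L ∈ linesIn S P ↔ P.1 ≤ L.1 ∧ L.1 ≤ S := by
  classical simp [linesIn]

lemma finrank_sup_points {P Q : PSub F v 1} (h : P ≠ Q) :
    finrank F ((P.1 ⊔ Q.1 :) : Submodule F (Fin v → F)) = 2 := by
  have hinf : P.1 ⊓ Q.1 = ⊥ := by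
    by_contra hne
    have h1 : finrank F (P.1 ⊓ Q.1 :) ≤ 1 := by
      have := Submodule.finrank_mono (inf_le_left : P.1 ⊓ Q.1 ≤ P.1)
      rw [P.2] at this; exact this
    have h0 : 0 < finrank F (P.1 ⊓ Q.1 :) := by
      rw [Module.finrank_pos_iff]
      exact Submodule.nontrivial_iff_ne_bot.mpr hne
    have e1 : P.1 ⊓ Q.1 = P.1 :=
      Submodule.eq_of_le_of_finrank_le inf_le_left (by rw [P.2]; omega)
    have e2 : P.1 ⊓ Q.1 = Q.1 :=
      Submodule.eq_of_le_of_finrank_le inf_le_right (by rw [Q.2]; omega)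
    exact h (Subtype.ext (e1 ▸ e2))
  have := Submodule.finrank_sup_add_finrank_inf_eq P.1 Q.1
  rw [hinf, P.2, Q.2, finrank_bot] at this
  omega

open Classical Finset in
lemma card_lines_through_two {S : Submodule F (Fin v → F)} {P Q : PSub F v 1}
    (hP : P.1 ≤ S) (hQ : Q.1 ≤ S) (hPQ : P ≠ Q) :
    ((linesIn S P).filter (fun L => Q.1 ≤ L.1)).card = 1 := by
  classical
  rw [Finset.card_eq_one]
  refine ⟨⟨P.1 ⊔ Q.1, finrank_sup_points hPQ⟩, ?_⟩
  ext L
  simp only [Finset.mem_filter, mem_linesIn, Finset.mem_singleton]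
  constructor
  · rintro ⟨⟨h1, h2⟩, h3⟩
    exact (psub_eq (Q := L) (sup_le h1 h3)).symm
  · rintro rfl
    exact ⟨⟨le_sup_left, sup_le hP hQ⟩, le_sup_right⟩

open Finset in
lemma sum_lines (K : PSub F v 1 → ℕ) {S : Submodule F (Fin v → F)} {P : PSub F v 1}
    (hP : P.1 ≤ S) :
    ∑ L ∈ linesIn S P, pmult K L.1 + K P
      = pmult K S + (linesIn S P).card * K P := by
  classical
  have step1 : ∀ L ∈ linesIn S P,
      pmult K L.1 = ∑ Q ∈ ptsIn S, if Q.1 ≤ L.1 then K Q else 0 := by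
    intro L hL
    rw [pmult_eq, ← Finset.sum_filter]
    congr 1
    ext Q
    simp only [mem_ptsIn, Finset.mem_filter]
    exact ⟨fun h => ⟨h.trans (mem_linesIn.mp hL).2, h⟩, fun h => h.2⟩
  rw [Finset.sum_congr rfl step1, Finset.sum_comm]
  have step2 : ∀ Q : PSub F v 1, ∑ L ∈ linesIn S P, (if Q.1 ≤ L.1 then K Q else 0)
      = ((linesIn S P).filter (fun L => Q.1 ≤ L.1)).card * K Q := by
    intro Q
    rw [← Finset.sum_filter, Finset.sum_const, smul_eq_mul]
  rw [Finset.sum_congr rfl (fun Q _ => step2 Q)]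
  have hPmem : P ∈ ptsIn S := mem_ptsIn.mpr hP
  rw [← Finset.add_sum_erase _ _ hPmem]
  have hfull : ((linesIn S P).filter (fun L => P.1 ≤ L.1)) = linesIn S P := by
    apply Finset.filter_true_of_mem
    intro L hL
    exact (mem_linesIn.mp hL).1
  rw [hfull]
  have herase : ∀ Q ∈ (ptsIn S).erase P,
      ((linesIn S P).filter (fun L => Q.1 ≤ L.1)).card * K Q = K Q := by
    intro Q hQ
    rw [card_lines_through_two hP (mem_ptsIn.mp (Finset.mem_of_mem_erase hQ))
      (Finset.ne_of_mem_erase hQ).symm, one_mul]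
  rw [Finset.sum_congr rfl herase, pmult_eq, ← Finset.add_sum_erase _ K hPmem]
  ring

open Finset in
lemma card_linesIn {S : Submodule F (Fin v → F)} {P : PSub F v 1} (hP : P.1 ≤ S)
    {k : ℕ} (hS : finrank F S = k) :
    (linesIn S P).card = θ (Fintype.card F) (k - 1) := by
  classical
  set q := Fintype.card F with hq
  have hq2 : 2 ≤ q := Fintype.one_lt_card
  have hk : 1 ≤ k := by
    have := Submodule.finrank_mono hP
    rw [P.2, hS] at this; exact this
  have pmult_one : ∀ T : Submodule F (Fin v → F),
      pmult (fun _ => 1) T = (ptsIn T).card := by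
    intro T; rw [pmult_eq, Finset.sum_const, smul_eq_mul, mul_one]
  have h1 := sum_lines (fun _ => (1:ℕ)) hP
  simp only [pmult_one, mul_one] at h1
  rw [card_ptsIn S hS] at h1
  have h2 : ∀ L ∈ linesIn S P, (ptsIn L.1).card = q + 1 := by
    intro L _
    rw [card_ptsIn L.1 L.2, theta_succ]
    simp [θ, hq]
  rw [Finset.sum_congr rfl h2, Finset.sum_const, smul_eq_mul] at h1
  -- h1 : (linesIn S P).card * (q + 1) + 1 = θ q k + (linesIn S P).card
  obtain ⟨m, rfl⟩ : ∃ m, k = m + 1 := ⟨k - 1, by omega⟩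
  rw [theta_succ] at h1
  simp only [Nat.add_sub_cancel]
  set N := (linesIn S P).card
  have h3 : q * N = q * θ q m := by nlinarith [h1]
  exact Nat.eq_of_mul_eq_mul_left (by omega) h3


/-- The standard dot-product bilinear form on `Fin v → F`. -/
noncomputable def dotF (F : Type*) [Field F] (v : ℕ) : LinearMap.BilinForm F (Fin v → F) :=
  LinearMap.mk₂ F (fun x y => ∑ i, x i * y i)
    (by intros; simp [Finset.sum_add_distrib, add_mul])
    (by intros; simp [Finset.mul_sum, mul_assoc])
    (by intros; simp [Finset.sum_add_distrib, mul_add])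
    (by intros; simp [Finset.mul_sum, mul_left_comm])

lemma dotF_refl : (dotF F v).IsRefl := by
  refine LinearMap.IsSymm.isRefl ⟨?_⟩
  intro x y
  simp [dotF, mul_comm]

lemma dotF_nondeg : (dotF F v).Nondegenerate := by
  refine ⟨fun x hx => ?_, fun x hx => ?_⟩
  all_goals
  · funext i
    have := hx (Pi.single i 1)
    simpa [dotF, Pi.single_apply, Finset.sum_ite_eq', Finset.sum_ite_eq] using this

/-- Orthogonal complement with respect to the dot product, as a map of `PSub`s. -/
noncomputable def orthP {k : ℕ} (hk : k ≤ v) (S : PSub F v k) : PSub F v (v - k) :=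
  ⟨(dotF F v).orthogonal S.1, by
    rw [LinearMap.BilinForm.finrank_orthogonal dotF_nondeg, S.2,
      Module.finrank_fin_fun]⟩

lemma orthP_orthP {k : ℕ} (hk : k ≤ v) (S : PSub F v k) :
    ((orthP (Nat.sub_le v k) (orthP hk S)).1 :) = S.1 :=
  LinearMap.BilinForm.orthogonal_orthogonal dotF_nondeg dotF_refl S.1

lemma orthP_coe {k : ℕ} (hk : k ≤ v) (S : PSub F v k) :
    (orthP hk S).1 = (dotF F v).orthogonal S.1 := rfl

lemma orthP_le_iff {k l : ℕ} (hk : k ≤ v) (hl : l ≤ v) (S : PSub F v k) (T : PSub F v l) :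
    (orthP hk S).1 ≤ (orthP hl T).1 ↔ T.1 ≤ S.1 := by
  rw [orthP_coe, orthP_coe]
  constructor
  · intro h
    have h2 := LinearMap.BilinForm.orthogonal_le (B := dotF F v) h
    exact le_trans (LinearMap.BilinForm.le_orthogonal_orthogonal dotF_refl)
      (le_trans h2
        ((LinearMap.BilinForm.orthogonal_orthogonal dotF_nondeg dotF_refl S.1).le))
  · exact fun h => LinearMap.BilinForm.orthogonal_le h

open Classical in
/-- The hyperplanes through a given point. -/
noncomputable def hypsThrough (Q : PSub F v 1) : Finset (PSub F v (v-1)) :=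
  Finset.univ.filter (fun H => Q.1 ≤ H.1)

lemma mem_hypsThrough {Q : PSub F v 1} {H : PSub F v (v-1)} :
    H ∈ hypsThrough Q ↔ Q.1 ≤ H.1 := by
  classical simp [hypsThrough]

lemma card_hypsThrough (hv : 1 ≤ v) (Q : PSub F v 1) :
    (hypsThrough Q).card = θ (Fintype.card F) (v - 1) := by
  classical
  have hv1 : (1:ℕ) ≤ v := hv
  have key : (hypsThrough Q).card = (ptsIn (orthP hv1 Q).1).card := by
    apply Finset.card_nbij' (fun H => ⟨(orthP (Nat.sub_le v 1) H).1, by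
        have := (orthP (Nat.sub_le v 1) H).2; exact this.trans (by omega)⟩)
      (fun P => orthP hv1 P)
    · intro H hH
      rw [Finset.mem_coe, mem_ptsIn]
      exact (orthP_le_iff (Nat.sub_le v 1) hv1 H Q).mpr (mem_hypsThrough.mp hH)
    · intro P hP
      rw [Finset.mem_coe, mem_hypsThrough]
      have h1 : P.1 ≤ (dotF F v).orthogonal Q.1 := mem_ptsIn.mp hP
      have h2 := LinearMap.BilinForm.orthogonal_le (B := dotF F v) h1
      exact le_trans (LinearMap.BilinForm.le_orthogonal_orthogonal dotF_refl) h2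
    · intro H _
      exact Subtype.ext (orthP_orthP (Nat.sub_le v 1) H)
    · intro P _
      exact Subtype.ext (orthP_orthP hv1 P)
  rw [key, card_ptsIn _ (orthP hv1 Q).2]

lemma card_hyps (hv : 1 ≤ v) :
    (Finset.univ : Finset (PSub F v (v-1))).card = θ (Fintype.card F) v := by
  classical
  have key : (Finset.univ : Finset (PSub F v (v-1))).card
      = (ptsIn (⊤ : Submodule F (Fin v → F))).card := by
    apply Finset.card_nbij' (fun H => ⟨(orthP (Nat.sub_le v 1) H).1, by
        have := (orthP (Nat.sub_le v 1) H).2; exact this.trans (by omega)⟩)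
      (fun P => orthP hv P)
    · intro H _; exact mem_ptsIn.mpr le_top
    · intro P _; exact Finset.mem_univ _
    · intro H _
      exact Subtype.ext (orthP_orthP (Nat.sub_le v 1) H)
    · intro P _
      exact Subtype.ext (orthP_orthP hv P)
  rw [key, card_ptsIn _ (by rw [finrank_top, Module.finrank_fin_fun])]


lemma ptsIn_top : ptsIn (⊤ : Submodule F (Fin v → F)) = Finset.univ := by
  classical
  ext P; simp [mem_ptsIn]

lemma finrank_top_pi : finrank F (⊤ : Submodule F (Fin v → F)) = v := by
  rw [finrank_top, Module.finrank_fin_fun]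

open Finset in
lemma sum_hyps (K : PSub F v 1 → ℕ) (hv : 1 ≤ v) :
    ∑ H : PSub F v (v-1), pmult K H.1 = pcard K * θ (Fintype.card F) (v-1) := by
  classical
  have step1 : ∀ H : PSub F v (v-1),
      pmult K H.1 = ∑ Q : PSub F v 1, if Q.1 ≤ H.1 then K Q else 0 := by
    intro H
    rw [pmult_eq, ptsIn, Finset.sum_filter]
  rw [Finset.sum_congr rfl (fun H _ => step1 H), Finset.sum_comm]
  have step2 : ∀ Q : PSub F v 1,
      (∑ H : PSub F v (v-1), if Q.1 ≤ H.1 then K Q else 0)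
        = θ (Fintype.card F) (v-1) * K Q := by
    intro Q
    rw [← Finset.sum_filter, Finset.sum_const, smul_eq_mul]
    congr 1
    rw [← card_hypsThrough hv Q]
    congr 1
  rw [Finset.sum_congr rfl (fun Q _ => step2 Q), pcard_eq, ← Finset.mul_sum, mul_comm]

open Classical in
/-- The characteristic arc of a hyperplane. -/
noncomputable def chi (H : PSub F v (v-1)) : PSub F v 1 → ℕ :=
  fun P => if P.1 ≤ H.1 then 1 else 0

lemma pmult_chi (H : PSub F v (v-1)) (S : Submodule F (Fin v → F)) :
    pmult (chi H) S = (ptsIn (S ⊓ H.1)).card := by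
  classical
  rw [pmult_eq]
  calc ∑ P ∈ ptsIn S, chi H P
      = ((ptsIn S).filter (fun P => P.1 ≤ H.1)).card := by
        rw [Finset.card_filter]
        exact Finset.sum_congr rfl (fun P _ => by simp [chi])
    _ = (ptsIn (S ⊓ H.1)).card := by
        congr 1
        ext P
        simp [mem_ptsIn, Finset.mem_filter, le_inf_iff]

lemma finrank_inf_line_hyp (hv : 1 ≤ v) {L : PSub F v 2} {H : PSub F v (v-1)}
    (h : ¬ L.1 ≤ H.1) : finrank F ((L.1 ⊓ H.1 :) : Submodule F (Fin v → F)) = 1 := by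
  have hsum := Submodule.finrank_sup_add_finrank_inf_eq L.1 H.1
  rw [L.2, H.2] at hsum
  have hlt : H.1 < L.1 ⊔ H.1 := by
    rcases lt_or_eq_of_le (le_sup_right : H.1 ≤ L.1 ⊔ H.1) with h1 | h1
    · exact h1
    · exact absurd (le_sup_left.trans h1.ge) h
  have h1 := Submodule.finrank_lt_finrank_of_lt hlt
  rw [H.2] at h1
  have h2 := Submodule.finrank_mono (le_top : L.1 ⊔ H.1 ≤ ⊤)
  rw [finrank_top_pi] at h2
  omega

lemma pmult_chi_line (hv : 1 ≤ v) (H : PSub F v (v-1)) (L : PSub F v 2) :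
    pmult (chi H) L.1 ≡ 1 [MOD Fintype.card F] := by
  classical
  set q := Fintype.card F
  by_cases h : L.1 ≤ H.1
  · have : L.1 ⊓ H.1 = L.1 := inf_eq_left.mpr h
    rw [pmult_chi, this, card_ptsIn _ L.2]
    show θ q 2 % q = 1 % q
    rw [theta_succ]
    have : θ q 1 = 1 := by simp [θ]
    rw [this, mul_one]
    exact Nat.add_mod_left q 1
  · rw [pmult_chi, card_ptsIn _ (finrank_inf_line_hyp hv h)]
    rfl

lemma pcard_chi (hv : 1 ≤ v) (H : PSub F v (v-1)) :
    pcard (chi H) = θ (Fintype.card F) (v-1) := by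
  rw [pcard_eq_pmult_top, pmult_chi, top_inf_eq, card_ptsIn _ H.2]

lemma theta_sq (q b : ℕ) :
    θ q (b+1) * θ q (b+1) = θ q (b+2) * θ q b + q ^ b := by
  have h1 := theta_succ q b
  have h2 := theta_add_pow q b
  have h3 := theta_succ q (b+1)
  calc θ q (b+1) * θ q (b+1) = θ q (b+1) * (q * θ q b + 1) := by rw [← h1]
    _ = q * θ q (b+1) * θ q b + θ q (b+1) := by ring
    _ = q * θ q (b+1) * θ q b + (θ q b + q ^ b) := by rw [h2]
    _ = (q * θ q (b+1) + 1) * θ q b + q ^ b := by ring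
    _ = θ q (b+2) * θ q b + q ^ b := by rw [← h3]

lemma sum_arcs (K K' C : PSub F v 1 → ℕ) (h : ∀ P, K P = K' P + C P)
    (S : Submodule F (Fin v → F)) : pmult K S = pmult K' S + pmult C S := by
  classical
  rw [pmult_eq, pmult_eq, pmult_eq, ← Finset.sum_add_distrib]
  exact Finset.sum_congr rfl (fun P _ => h P)


open Classical Finset in
lemma nat_card_fin_subtype {m : ℕ} (p : Fin m → Prop) :
    Nat.card {i // p i} = ∑ i : Fin m, if p i then 1 else 0 := by
  classical
  rw [Nat.card_eq_fintype_card, Fintype.card_subtype, Finset.card_filter]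

open Finset in
lemma key (hv : 2 ≤ v) : ∀ t : ℕ, 1 ≤ t → t ≤ Fintype.card F - 1 →
    ∀ K : PSub F v 1 → ℕ,
    (∀ L : PSub F v 2, pmult K L.1 ≡ t [MOD Fintype.card F]) →
    pcard K = θ (Fintype.card F) (v-1) * t →
    ∃ Hs : Fin t → PSub F v (v-1),
      ∀ P : PSub F v 1, K P = Nat.card {i : Fin t // P.1 ≤ (Hs i).1} := by
  classical
  set q := Fintype.card F with hqdef
  have hq2 : 2 ≤ q := Fintype.one_lt_card
  intro t
  induction t with
  | zero => omega
  | succ n ih =>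
    intro ht1 ht2 K hK hcard
    -- Step 1 : there is a zero point
    have hzero : ∃ P : PSub F v 1, K P = 0 := by
      by_contra hz
      push_neg at hz
      have h1 : ∀ P : PSub F v 1, 1 ≤ K P := fun P => Nat.one_le_iff_ne_zero.mpr (hz P)
      have h2 : (Finset.univ : Finset (PSub F v 1)).card ≤ pcard K := by
        rw [pcard_eq]
        calc (Finset.univ : Finset (PSub F v 1)).card
            = ∑ _P : PSub F v 1, 1 := by rw [Finset.sum_const, smul_eq_mul, mul_one]
          _ ≤ ∑ P : PSub F v 1, K P := Finset.sum_le_sum (fun P _ => h1 P)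
      rw [← ptsIn_top, card_ptsIn _ finrank_top_pi] at h2
      rw [hcard] at h2
      -- h2 : θ q v ≤ θ q (v-1) * (n+1), contradiction
      obtain ⟨w, hw⟩ : ∃ w, v = w + 1 := ⟨v - 1, by omega⟩
      rw [hw] at h2
      rw [theta_succ] at h2
      simp only [Nat.add_sub_cancel] at h2
      have hts := theta_succ q w
      have hb : θ q w * (n+1) ≤ θ q w * (q-1) := Nat.mul_le_mul_left _ (by omega)
      have h3 : θ q w * (q - 1) < q * θ q w + 1 := by
        obtain ⟨r, hr⟩ : ∃ r, q = r + 1 := ⟨q - 1, by omega⟩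
        rw [hr]
        have he : r + 1 - 1 = r := rfl
        rw [he]
        nlinarith [Nat.zero_le (θ (r+1) w)]
      linarith [h2, hts, hb, h3]
    -- Step 2 : every line through a zero point has multiplicity exactly n+1
    have hline : ∀ P₀ : PSub F v 1, K P₀ = 0 →
        ∀ L : PSub F v 2, P₀.1 ≤ L.1 → pmult K L.1 = n + 1 := by
      intro P₀ hP0
      have hsum := sum_lines K (le_top : P₀.1 ≤ ⊤)
      rw [hP0, Nat.mul_zero, Nat.add_zero, Nat.add_zero, ← pcard_eq_pmult_top, hcard] at hsum
      have hN : (linesIn (⊤ : Submodule F (Fin v → F)) P₀).card = θ q (v-1) :=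
        card_linesIn le_top finrank_top_pi
      have hlower : ∀ L ∈ linesIn (⊤ : Submodule F (Fin v → F)) P₀, n + 1 ≤ pmult K L.1 := by
        intro L _
        calc n + 1 = (n+1) % q := (Nat.mod_eq_of_lt (by omega)).symm
          _ = pmult K L.1 % q := (hK L).symm
          _ ≤ pmult K L.1 := Nat.mod_le _ _
      intro L hL
      have hLmem : L ∈ linesIn (⊤ : Submodule F (Fin v → F)) P₀ :=
        mem_linesIn.mpr ⟨hL, le_top⟩
      by_contra hne
      have hlt : θ q (v-1) * (n+1) < ∑ L ∈ linesIn (⊤ : Submodule F (Fin v → F)) P₀,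
          pmult K L.1 := by
        calc θ q (v-1) * (n+1)
            = ∑ _L ∈ linesIn (⊤ : Submodule F (Fin v → F)) P₀, (n+1) := by
              rw [Finset.sum_const, smul_eq_mul, hN]
          _ < _ := Finset.sum_lt_sum hlower
              ⟨L, hLmem, lt_of_le_of_ne (hlower L hLmem) (Ne.symm hne)⟩
      omega
    -- Step 3 : hyperplanes containing a zero point have multiplicity θ (v-2) * (n+1)
    have hhyp : ∀ H : PSub F v (v-1), (∃ P₀ : PSub F v 1, P₀.1 ≤ H.1 ∧ K P₀ = 0) →
        pmult K H.1 = θ q (v-2) * (n+1) := by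
      rintro H ⟨P₀, hle, hP0⟩
      have hsum := sum_lines K hle
      rw [hP0, Nat.mul_zero, Nat.add_zero, Nat.add_zero] at hsum
      have hN := card_linesIn hle H.2
      have hconst : ∀ L ∈ linesIn H.1 P₀, pmult K L.1 = n + 1 :=
        fun L hLm => hline P₀ hP0 L (mem_linesIn.mp hLm).1
      rw [Finset.sum_congr rfl hconst, Finset.sum_const, smul_eq_mul, hN] at hsum
      rw [← hsum, Nat.sub_sub]
    -- Step 4 : there is a hyperplane containing no zero point
    obtain ⟨Hstar, hHstar⟩ : ∃ H : PSub F v (v-1),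
        ∀ P : PSub F v 1, P.1 ≤ H.1 → K P ≠ 0 := by
      by_contra hall
      push_neg at hall
      have hconst : ∀ H : PSub F v (v-1), pmult K H.1 = θ q (v-2) * (n+1) := by
        intro H
        obtain ⟨P, hP1, hP2⟩ := hall H
        exact hhyp H ⟨P, hP1, hP2⟩
      have hsum := sum_hyps K (by omega)
      rw [Finset.sum_congr rfl (fun H _ => hconst H), Finset.sum_const, smul_eq_mul,
        card_hyps (by omega), hcard] at hsum
      rw [← hqdef] at hsum
      -- hsum : θ q v * (θ q (v-2) * (n+1)) = θ q (v-1) * (n+1) * θ q (v-1)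
      obtain ⟨b, rfl⟩ : ∃ b, v = b + 2 := ⟨v - 2, by omega⟩
      have hid := theta_sq q b
      simp only [show b + 2 - 1 = b + 1 from rfl, show b + 2 - 2 = b from rfl] at hsum
      have hq0 : 1 ≤ q ^ b := Nat.one_le_pow _ _ (by omega)
      nlinarith [hsum, hid]
    -- Step 5 : subtract the hyperplane
    have hKpos : ∀ P : PSub F v 1, P.1 ≤ Hstar.1 → 1 ≤ K P :=
      fun P h => Nat.one_le_iff_ne_zero.mpr (hHstar P h)
    set K' : PSub F v 1 → ℕ := fun P => K P - chi Hstar P with hK'def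
    have hsplit : ∀ P : PSub F v 1, K P = K' P + chi Hstar P := by
      intro P
      by_cases h : P.1 ≤ Hstar.1
      · have h1 := hKpos P h
        have h2 : chi Hstar P = 1 := by simp [chi, h]
        simp only [hK'def, h2]
        omega
      · have h2 : chi Hstar P = 0 := by simp [chi, h]
        simp only [hK'def, h2]
        omega
    have hK'line : ∀ L : PSub F v 2, pmult K' L.1 ≡ n [MOD q] := by
      intro L
      have h1 : pmult K L.1 = pmult K' L.1 + pmult (chi Hstar) L.1 :=
        sum_arcs K K' (chi Hstar) hsplit L.1
      have h2 := pmult_chi_line (v := v) (by omega) Hstar L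
      have h3 := hK L
      rw [h1] at h3
      exact Nat.ModEq.add_right_cancel h2 h3
    have hK'card : pcard K' = θ q (v-1) * n := by
      have h1 : pcard K = pcard K' + pcard (chi Hstar) := by
        rw [pcard_eq, pcard_eq, pcard_eq, ← Finset.sum_add_distrib]
        exact Finset.sum_congr rfl (fun P _ => hsplit P)
      rw [hcard, pcard_chi (by omega)] at h1
      rw [← hqdef] at h1
      have : θ q (v-1) * (n+1) = θ q (v-1) * n + θ q (v-1) := by ring
      omega
    -- conclude
    rcases Nat.eq_zero_or_pos n with hn | hn
    · subst hn
      refine ⟨fun _ => Hstar, ?_⟩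
      intro P
      have hz : ∀ P : PSub F v 1, K' P = 0 := by
        intro P
        have h0 : pcard K' = 0 := by rw [hK'card, Nat.mul_zero]
        rw [pcard_eq] at h0
        exact Finset.sum_eq_zero_iff.mp h0 P (Finset.mem_univ P)
      rw [hsplit P, hz P, Nat.zero_add, nat_card_fin_subtype]
      simp [chi]
    · obtain ⟨Hs', hHs'⟩ := ih hn (by omega) K' hK'line hK'card
      refine ⟨Fin.cons Hstar Hs', ?_⟩
      intro P
      rw [hsplit P, hHs' P, nat_card_fin_subtype, nat_card_fin_subtype,
        Fin.sum_univ_succ]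
      simp only [Fin.cons_zero, Fin.cons_succ]
      rw [add_comm]
      congr 1

end Stmt10

/-- Every `(t mod q)`-arc in `PG(v-1,q)` of cardinality exactly `[v-1]_q * t`
is a sum of `t` (not necessarily distinct) hyperplanes. -/
theorem stmt10 {F : Type*} [Field F] [Fintype F] (q : ℕ) (hq : Fintype.card F = q)
    {v : ℕ} (hv : 2 ≤ v) (t : ℕ) (ht1 : 1 ≤ t) (ht2 : t ≤ q - 1)
    (K : PSub F v 1 → ℕ)
    (hK : ∀ L : PSub F v 2, pmult K L.1 ≡ t [MOD q])
    (hcard : pcard K = (q ^ (v - 1) - 1) / (q - 1) * t) :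
    ∃ Hs : Fin t → PSub F v (v - 1),
      ∀ P : PSub F v 1, K P = Nat.card {i : Fin t // P.1 ≤ (Hs i).1} := by
  subst hq
  set q := Fintype.card F with hqdef
  have hq2 : 2 ≤ q := Fintype.one_lt_card
  have hθ : (q ^ (v - 1) - 1) / (q - 1) = Stmt10.θ q (v-1) := by
    have hm := Stmt10.theta_mul q (v-1) (by omega)
    calc (q ^ (v-1) - 1) / (q - 1)
        = ((q - 1) * Stmt10.θ q (v-1) + 1 - 1) / (q - 1) := by rw [hm]
      _ = Stmt10.θ q (v-1) := by
          rw [Nat.add_sub_cancel, Nat.mul_div_cancel_left _ (by omega)]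
  rw [hθ] at hcard
  exact Stmt10.key hv t ht1 ht2 K hK hcard
end

section
/- Let q be a prime power, k ≥ 2, and let K be an (n,s)-arc in PG(k−1,q). Let λ_i denote the number of points P with K(P) = i. Then, as an identity of integers, the sum over all hyperplanes H of the binomial coefficient C(s − K(H), 2) equals C(s,2)·[k]_q − n·(s−1)·[k−1]_q + C(n,2)·[k−2]_q + q^{k−2}·Σ_{i≥2} C(i,2)·λ_i, where [j]_q = (q^j − 1)/(q − 1). -/
open Module

/-- `[j]_q = (q^j - 1)/(q - 1)` (so `[0]_q = 0`). -/
def gauss (q j : ℕ) : ℕ := (q ^ j - 1) / (q - 1)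

section Aux

lemma gauss_mul (q : ℕ) (hq : 2 ≤ q) (j : ℕ) :
    ((q:ℕ) - 1) * (∑ i ∈ Finset.range j, q ^ i) = q ^ j - 1 := by
  induction j with
  | zero => simp
  | succ j ih =>
    rw [Finset.sum_range_succ, Nat.mul_add, ih]
    have h1 : 1 ≤ q ^ j := Nat.one_le_pow _ _ (by omega)
    have h2 : q ^ (j+1) = q * q ^ j := by ring
    have h3 : q ^ j ≤ q ^ (j+1) := Nat.pow_le_pow_right (by omega) (by omega)
    rw [Nat.sub_mul, one_mul, h2]
    omega

lemma gauss_geom (q : ℕ) (hq : 2 ≤ q) (j : ℕ) :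
    (gauss q j : ℕ) = ∑ i ∈ Finset.range j, q ^ i := by
  have := gauss_mul q hq j
  rw [gauss, ← this]
  exact Nat.mul_div_cancel_left _ (by omega)

lemma gauss_succ (q : ℕ) (hq : 2 ≤ q) (j : ℕ) :
    gauss q (j + 1) = gauss q j + q ^ j := by
  rw [gauss_geom q hq, gauss_geom q hq, Finset.sum_range_succ]

lemma choose2_cast (x : ℕ) : (x.choose 2 : ℤ) * 2 = x * ((x:ℤ) - 1) := by
  induction x with
  | zero => simp
  | succ y ih =>
    rw [Nat.choose_succ_succ, Nat.choose_one_right]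
    push_cast
    push_cast at ih
    linarith

lemma choose2_shift {m s : ℕ} (h : m ≤ s) :
    ((s - m).choose 2 : ℤ) =
      (s.choose 2 : ℤ) - (m : ℤ) * ((s:ℤ) - 1) + (m.choose 2 : ℤ) := by
  apply mul_right_cancel₀ (b := (2:ℤ)) two_ne_zero
  rw [choose2_cast]
  have hc : ((s - m : ℕ) : ℤ) = (s : ℤ) - (m : ℤ) := by
    rw [Nat.cast_sub h]
  rw [hc]
  have h1 := choose2_cast s
  have h2 := choose2_cast m
  ring_nf
  ring_nf at h1 h2
  linarith

/-- The number of one-dimensional subspaces contained in a given subspace `X`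
is the Gaussian number `[dim X]_q`. -/
lemma card_points (F : Type*) [Field F] [Fintype F] (q : ℕ) (hq : Fintype.card F = q)
    {U : Type*} [AddCommGroup U] [Module F U] [Finite U] (X : Submodule F U) :
    Nat.card {P : Submodule F U // P ≤ X ∧ finrank F P = 1} = gauss q (finrank F X) := by
  classical
  have hq2 : 2 ≤ q := hq ▸ Fintype.one_lt_card
  cases nonempty_fintype U
  set m := finrank F X with hm
  let e : {v : U // v ∈ X ∧ v ≠ 0} → {P : Submodule F U // P ≤ X ∧ finrank F P = 1} :=
    fun v => ⟨Submodule.span F {v.1}, (Submodule.span_singleton_le_iff_mem _ _).2 v.2.1,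
      finrank_span_singleton v.2.2⟩
  have hdom : Fintype.card {v : U // v ∈ X ∧ v ≠ 0} = q ^ m - 1 := by
    have e1 : {v : U // v ∈ X ∧ v ≠ 0} ≃ {w : X // ¬ w = 0} :=
      ⟨fun v => ⟨⟨v.1, v.2.1⟩, by simpa [Submodule.mk_eq_zero] using v.2.2⟩,
       fun w => ⟨w.1.1, w.1.2, by simpa [Submodule.coe_eq_zero] using w.2⟩,
       fun v => rfl, fun w => rfl⟩
    rw [Fintype.card_congr e1, Fintype.card_subtype_compl, Fintype.card_subtype_eq,
      card_eq_pow_finrank (K := F) (V := X), hq]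
  have hfib : ∀ P : {P : Submodule F U // P ≤ X ∧ finrank F P = 1},
      Fintype.card {v : {v : U // v ∈ X ∧ v ≠ 0} // e v = P} = q - 1 := by
    intro P
    have heq : ∀ v : {v : U // v ∈ X ∧ v ≠ 0}, e v = P ↔ v.1 ∈ P.1 := by
      intro v
      constructor
      · intro h
        have : Submodule.span F {v.1} = P.1 := congrArg Subtype.val h
        rw [← this]; exact Submodule.mem_span_singleton_self _
      · intro h
        have hle : Submodule.span F {v.1} ≤ P.1 := (Submodule.span_singleton_le_iff_mem _ _).2 h
        have : Submodule.span F {v.1} = P.1 :=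
          Submodule.eq_of_le_of_finrank_le hle
            (by rw [P.2.2, finrank_span_singleton v.2.2])
        exact Subtype.ext this
    have e2 : {v : {v : U // v ∈ X ∧ v ≠ 0} // e v = P} ≃ {w : P.1 // ¬ w = 0} :=
      ⟨fun v => ⟨⟨v.1.1, (heq v.1).1 v.2⟩, by simpa [Submodule.mk_eq_zero] using v.1.2.2⟩,
       fun w => ⟨⟨w.1.1, P.2.1 w.1.2, by simpa [Submodule.coe_eq_zero] using w.2⟩,
         (heq _).2 w.1.2⟩,
       fun v => by ext; rfl, fun w => by ext; rfl⟩
    rw [Fintype.card_congr e2, Fintype.card_subtype_compl, Fintype.card_subtype_eq,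
      card_eq_pow_finrank (K := F) (V := P.1), hq, P.2.2, pow_one]
  have hsum : Fintype.card {v : U // v ∈ X ∧ v ≠ 0} =
      ∑ P : {P : Submodule F U // P ≤ X ∧ finrank F P = 1},
        Fintype.card {v : {v : U // v ∈ X ∧ v ≠ 0} // e v = P} := by
    rw [← Fintype.card_sigma, Fintype.card_congr (Equiv.sigmaFiberEquiv e)]
  rw [hdom] at hsum
  simp only [hfib, Finset.sum_const, Finset.card_univ, smul_eq_mul] at hsum
  rw [Nat.card_eq_fintype_card, gauss]
  exact (Nat.div_eq_of_eq_mul_left (by omega) hsum).symm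

variable {F : Type*} [Field F] {V : Type*} [AddCommGroup V] [Module F V]

lemma coann_anti {Φ Ψ : Submodule F (Module.Dual F V)} (h : Φ ≤ Ψ) :
    Ψ.dualCoannihilator ≤ Φ.dualCoannihilator := by
  intro v hv
  rw [Submodule.mem_dualCoannihilator] at hv ⊢
  exact fun φ hφ => hv φ (h hφ)

/-- Hyperplanes containing `W` correspond to one-dimensional subspaces of the
dual annihilator of `W`. -/
noncomputable def hyp_equiv [FiniteDimensional F V] (hm1 : 1 ≤ finrank F V) (W : Submodule F V) :
    {H : {S : Submodule F V // finrank F S = finrank F V - 1} // W ≤ H.1} ≃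
      {L : Submodule F (Module.Dual F V) // L ≤ W.dualAnnihilator ∧ finrank F L = 1} := by
  classical
  set m := finrank F V with hm
  have hannrank : ∀ H : Submodule F V, finrank F H = m - 1 →
      finrank F H.dualAnnihilator = 1 := by
    intro H hH
    have := Subspace.finrank_add_finrank_dualCoannihilator_eq (H.dualAnnihilator)
    rw [Subspace.dualAnnihilator_dualCoannihilator_eq, hH, ← hm] at this
    omega
  have hcorank : ∀ L : Submodule F (Module.Dual F V), finrank F L = 1 →
      finrank F L.dualCoannihilator = m - 1 := by
    intro L hL
    have := Subspace.finrank_add_finrank_dualCoannihilator_eq L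
    rw [hL, ← hm] at this
    omega
  have hWle : ∀ L : Submodule F (Module.Dual F V), L ≤ W.dualAnnihilator →
      W ≤ L.dualCoannihilator := by
    intro L hL
    calc W = W.dualAnnihilator.dualCoannihilator :=
        Subspace.dualAnnihilator_dualCoannihilator_eq.symm
    _ ≤ L.dualCoannihilator := coann_anti hL
  refine ⟨fun H => ⟨H.1.1.dualAnnihilator,
      Subspace.dualAnnihilator_le_dualAnnihilator_iff.2 H.2, hannrank _ H.1.2⟩,
    fun L => ⟨⟨L.1.dualCoannihilator, hcorank _ L.2.2⟩, hWle _ L.2.1⟩, ?_, ?_⟩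
  · intro H
    apply Subtype.ext
    apply Subtype.ext
    exact Subspace.dualAnnihilator_dualCoannihilator_eq
  · intro L
    apply Subtype.ext
    exact Subspace.dualCoannihilator_dualAnnihilator_eq

/-- The number of hyperplanes containing a given subspace `W` is
`[dim V - dim W]_q`. -/
lemma card_hyp [Fintype F] (q : ℕ) (hq : Fintype.card F = q) [Finite V]
    (hm1 : 1 ≤ finrank F V) (t : ℕ) (ht : t = finrank F V - 1) (W : Submodule F V) :
    Nat.card {H : {S : Submodule F V // finrank F S = t} // W ≤ H.1} =
      gauss q (finrank F V - finrank F W) := by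
  subst ht
  have hFD : Finite (Module.Dual F V) :=
    Finite.of_injective (fun f => (f : V → F)) DFunLike.coe_injective
  rw [Nat.card_congr (hyp_equiv hm1 W), card_points F q hq (W.dualAnnihilator)]
  congr 1
  have h1 := Subspace.finrank_add_finrank_dualCoannihilator_eq (W.dualAnnihilator)
  rw [Subspace.dualAnnihilator_dualCoannihilator_eq] at h1
  have h2 : finrank F W ≤ finrank F V := Submodule.finrank_le W
  omega

lemma rank_sup_two [FiniteDimensional F V] {P Q : Submodule F V}
    (hP : finrank F P = 1) (hQ : finrank F Q = 1) (hPQ : P ≠ Q) :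
    finrank F ↥(P ⊔ Q) = 2 := by
  have hinf : finrank F ↥(P ⊓ Q) = 0 := by
    by_contra h
    have h1 : finrank F ↥(P ⊓ Q) ≤ 1 := hP ▸ Submodule.finrank_mono inf_le_left
    have hEP : P ⊓ Q = P := Submodule.eq_of_le_of_finrank_le inf_le_left (by omega)
    have hEQ : P ⊓ Q = Q := Submodule.eq_of_le_of_finrank_le inf_le_right (by omega)
    exact hPQ (hEP ▸ hEQ)
  have := Submodule.finrank_sup_add_finrank_inf_eq P Q
  omega

end Aux

/-- For an `(n,s)`-arc `K` in `PG(k-1,q)`, with `λ_i` the number of points of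
multiplicity `i`,
`∑_H C(s - K(H), 2) = C(s,2)[k]_q - n(s-1)[k-1]_q + C(n,2)[k-2]_q
  + q^(k-2) ∑_{i} C(i,2) λ_i`. -/
theorem stmt14 {F : Type*} [Field F] [Fintype F] (q : ℕ) (hq : Fintype.card F = q)
    {k : ℕ} (hk : 2 ≤ k) (n s : ℕ)
    (K : PSub F k 1 → ℕ) (hn : pcard K = n)
    (hs : ∀ H : PSub F k (k - 1), pmult K H.1 ≤ s)
    (hs' : ∃ H : PSub F k (k - 1), pmult K H.1 = s) :
    (∑ᶠ H : PSub F k (k - 1), ((s - pmult K H.1).choose 2 : ℤ)) =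
      (s.choose 2 : ℤ) * (gauss q k : ℤ)
        - (n : ℤ) * ((s : ℤ) - 1) * (gauss q (k - 1) : ℤ)
        + (n.choose 2 : ℤ) * (gauss q (k - 2) : ℤ)
        + (q : ℤ) ^ (k - 2) *
            ∑ᶠ i : ℕ, (i.choose 2 : ℤ) * (Nat.card {P : PSub F k 1 // K P = i} : ℤ) := by
  classical
  have hq2 : 2 ≤ q := hq ▸ Fintype.one_lt_card
  have hV : finrank F (Fin k → F) = k := Module.finrank_fin_fun F
  letI : Fintype (PSub F k 1) := Fintype.ofFinite _
  letI : Fintype (PSub F k (k-1)) := Fintype.ofFinite _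
  -- counting hyperplanes above a subspace
  have hcount : ∀ W : Submodule F (Fin k → F),
      Nat.card {H : PSub F k (k-1) // W ≤ H.1} = gauss q (k - finrank F W) := by
    intro W
    have h := card_hyp q hq (V := Fin k → F) (by rw [hV]; omega) (k-1) (by rw [hV]) W
    rw [hV] at h
    exact h
  have hind : ∀ W : Submodule F (Fin k → F),
      (∑ H : PSub F k (k-1), if W ≤ H.1 then (1:ℤ) else 0)
        = (gauss q (k - finrank F W) : ℤ) := by
    intro W
    rw [Finset.sum_boole]
    norm_cast
    rw [← Fintype.card_subtype, ← Nat.card_eq_fintype_card, hcount W]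
  have hindP : ∀ P : PSub F k 1,
      (∑ H : PSub F k (k-1), if P.1 ≤ H.1 then (1:ℤ) else 0) = (gauss q (k-1) : ℤ) := by
    intro P
    have h := hind P.1
    rw [P.2] at h
    exact h
  -- pmult as a finite sum
  have hpm : ∀ S : Submodule F (Fin k → F),
      (pmult K S : ℤ) = ∑ P : PSub F k 1, (K P : ℤ) * (if P.1 ≤ S then 1 else 0) := by
    intro S
    have h : pmult K S = ∑ P : PSub F k 1, (if P.1 ≤ S then K P else 0) := by
      rw [pmult, finsum_eq_sum_of_fintype]
      exact Finset.sum_congr rfl (fun P _ => finsum_eq_if)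
    rw [h]
    push_cast
    exact Finset.sum_congr rfl (fun P _ => by by_cases hc : P.1 ≤ S <;> simp [hc])
  have hnn : (∑ P : PSub F k 1, (K P : ℤ)) = (n : ℤ) := by
    rw [← hn, pcard, finsum_eq_sum_of_fintype]
    push_cast
    rfl
  -- the lambda-sum
  have hT : (∑ᶠ i : ℕ, (i.choose 2 : ℤ) * (Nat.card {P : PSub F k 1 // K P = i} : ℤ))
      = ∑ P : PSub F k 1, ((K P).choose 2 : ℤ) := by
    rw [finsum_eq_finset_sum_of_support_subset _ (s := Finset.image K Finset.univ) ?hsupp]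
    case hsupp =>
      intro i hi
      simp only [Function.mem_support] at hi
      have hne : Nat.card {P : PSub F k 1 // K P = i} ≠ 0 := by
        intro h0
        rw [h0] at hi
        simp at hi
      have : Nonempty {P : PSub F k 1 // K P = i} := (Nat.card_ne_zero.1 hne).1
      obtain ⟨⟨P, hP⟩⟩ := this
      simp only [Finset.coe_image, Set.mem_image]
      exact ⟨P, by simp, hP⟩
    calc ∑ i ∈ Finset.image K Finset.univ,
          (i.choose 2 : ℤ) * (Nat.card {P : PSub F k 1 // K P = i} : ℤ)
        = ∑ i ∈ Finset.image K Finset.univ,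
            ∑ P ∈ Finset.univ.filter (fun P => K P = i), ((K P).choose 2 : ℤ) := by
          refine Finset.sum_congr rfl (fun i _ => ?_)
          rw [Nat.card_eq_fintype_card, Fintype.card_subtype]
          rw [Finset.sum_congr rfl
            (fun P hP => by rw [(Finset.mem_filter.1 hP).2] :
              ∀ P ∈ Finset.univ.filter (fun P => K P = i), ((K P).choose 2 : ℤ) = (i.choose 2 : ℤ))]
          rw [Finset.sum_const, nsmul_eq_mul, mul_comm]
      _ = ∑ P : PSub F k 1, ((K P).choose 2 : ℤ) :=
          Finset.sum_fiberwise_of_maps_to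
            (fun P _ => Finset.mem_image_of_mem K (Finset.mem_univ P)) _
  -- the three moment identities
  have e0 : (∑ _H : PSub F k (k-1), (1:ℤ)) = (gauss q k : ℤ) := by
    have h := hind ⊥
    rw [finrank_bot] at h
    simpa using h
  have e1 : (∑ H : PSub F k (k-1), (pmult K H.1 : ℤ)) = (n:ℤ) * (gauss q (k-1) : ℤ) := by
    calc (∑ H : PSub F k (k-1), (pmult K H.1 : ℤ))
        = ∑ H : PSub F k (k-1), ∑ P : PSub F k 1,
            (K P : ℤ) * (if P.1 ≤ H.1 then 1 else 0) :=
          Finset.sum_congr rfl (fun H _ => hpm H.1)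
      _ = ∑ P : PSub F k 1, ∑ H : PSub F k (k-1),
            (K P : ℤ) * (if P.1 ≤ H.1 then 1 else 0) := Finset.sum_comm
      _ = ∑ P : PSub F k 1, (K P : ℤ) * (gauss q (k-1) : ℤ) := by
          refine Finset.sum_congr rfl (fun P _ => ?_)
          rw [← Finset.mul_sum, hindP P]
      _ = (n:ℤ) * (gauss q (k-1) : ℤ) := by rw [← Finset.sum_mul, hnn]
  have hx2 : ∀ (P Q : PSub F k 1) (H : PSub F k (k-1)),
      ((if P.1 ≤ H.1 then (1:ℤ) else 0) * (if Q.1 ≤ H.1 then (1:ℤ) else 0))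
        = (if P.1 ⊔ Q.1 ≤ H.1 then (1:ℤ) else 0) := by
    intro P Q H
    by_cases h1 : P.1 ≤ H.1 <;> by_cases h2 : Q.1 ≤ H.1 <;> simp [h1, h2, sup_le_iff]
  have hsup : ∀ P Q : PSub F k 1,
      (∑ H : PSub F k (k-1), if P.1 ⊔ Q.1 ≤ H.1 then (1:ℤ) else 0)
        = if P = Q then (gauss q (k-1) : ℤ) else (gauss q (k-2) : ℤ) := by
    intro P Q
    by_cases hPQ : P = Q
    · subst hPQ
      simp only [sup_idem, if_pos rfl]
      exact hindP P
    · have h := hind (P.1 ⊔ Q.1)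
      rw [rank_sup_two P.2 Q.2 (fun hc => hPQ (Subtype.ext hc))] at h
      rw [if_neg hPQ]
      exact h
  have e2 : (∑ H : PSub F k (k-1), (pmult K H.1 : ℤ)^2)
      = (gauss q (k-2):ℤ) * (n:ℤ)^2
        + ((gauss q (k-1):ℤ) - (gauss q (k-2):ℤ)) * ∑ P : PSub F k 1, (K P:ℤ)^2 := by
    calc (∑ H : PSub F k (k-1), (pmult K H.1 : ℤ)^2)
        = ∑ H : PSub F k (k-1), ∑ P : PSub F k 1, ∑ Q : PSub F k 1,
            ((K P : ℤ) * (K Q : ℤ)) * (if P.1 ⊔ Q.1 ≤ H.1 then (1:ℤ) else 0) := by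
          refine Finset.sum_congr rfl (fun H _ => ?_)
          rw [sq, hpm H.1, Finset.sum_mul_sum]
          exact Finset.sum_congr rfl (fun P _ => Finset.sum_congr rfl (fun Q _ => by
            rw [← hx2 P Q H]; ring))
      _ = ∑ P : PSub F k 1, ∑ Q : PSub F k 1,
            ((K P : ℤ) * (K Q : ℤ)) *
              (if P = Q then (gauss q (k-1) : ℤ) else (gauss q (k-2) : ℤ)) := by
          rw [Finset.sum_comm]
          refine Finset.sum_congr rfl (fun P _ => ?_)
          rw [Finset.sum_comm]
          refine Finset.sum_congr rfl (fun Q _ => ?_)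
          rw [← Finset.mul_sum, hsup P Q]
      _ = ∑ P : PSub F k 1, ∑ Q : PSub F k 1,
            (((K P : ℤ) * (K Q : ℤ)) * (gauss q (k-2) : ℤ)
              + (if P = Q then ((K P : ℤ) * (K Q : ℤ))
                  * ((gauss q (k-1) : ℤ) - (gauss q (k-2) : ℤ)) else 0)) := by
          refine Finset.sum_congr rfl (fun P _ => Finset.sum_congr rfl (fun Q _ => ?_))
          by_cases hPQ : P = Q <;> simp [hPQ] <;> ring
      _ = (gauss q (k-2):ℤ) * (n:ℤ)^2
          + ((gauss q (k-1):ℤ) - (gauss q (k-2):ℤ)) * ∑ P : PSub F k 1, (K P:ℤ)^2 := by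
          rw [Finset.sum_congr rfl (fun P (_ : P ∈ Finset.univ) => Finset.sum_add_distrib),
            Finset.sum_add_distrib]
          congr 1
          · calc ∑ P : PSub F k 1, ∑ Q : PSub F k 1,
                  ((K P : ℤ) * (K Q : ℤ)) * (gauss q (k-2) : ℤ)
                = ∑ P : PSub F k 1, ((K P : ℤ) * (∑ Q : PSub F k 1, (K Q : ℤ)))
                    * (gauss q (k-2) : ℤ) := by
                  refine Finset.sum_congr rfl (fun P _ => ?_)
                  rw [Finset.mul_sum, Finset.sum_mul]
              _ = (gauss q (k-2):ℤ) * (n:ℤ)^2 := by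
                  rw [← Finset.sum_mul, ← Finset.sum_mul, hnn]
                  ring
          · calc ∑ P : PSub F k 1, ∑ Q : PSub F k 1,
                  (if P = Q then ((K P : ℤ) * (K Q : ℤ))
                    * ((gauss q (k-1) : ℤ) - (gauss q (k-2) : ℤ)) else 0)
                = ∑ P : PSub F k 1, ((K P : ℤ) * (K P : ℤ))
                    * ((gauss q (k-1) : ℤ) - (gauss q (k-2) : ℤ)) := by
                  refine Finset.sum_congr rfl (fun P _ => ?_)
                  rw [Finset.sum_ite_eq]
                  simp
              _ = ((gauss q (k-1):ℤ) - (gauss q (k-2):ℤ))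
                    * ∑ P : PSub F k 1, (K P:ℤ)^2 := by
                  rw [Finset.mul_sum]
                  exact Finset.sum_congr rfl (fun P _ => by ring)
  -- gauss recursion
  have e3 : (gauss q (k-1) : ℤ) = (gauss q (k-2) : ℤ) + (q:ℤ)^(k-2) := by
    have h1 : k - 1 = (k-2) + 1 := by omega
    rw [h1, gauss_succ q hq2 (k-2)]
    push_cast
    ring
  -- choose-2 facts
  have e5 : (∑ P : PSub F k 1, ((K P).choose 2 : ℤ)) * 2
      = (∑ P : PSub F k 1, (K P:ℤ)^2) - (n:ℤ) := by
    rw [Finset.sum_mul, ← hnn, ← Finset.sum_sub_distrib]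
    refine Finset.sum_congr rfl (fun P _ => ?_)
    rw [choose2_cast]
    ring
  have e6 : (n.choose 2 : ℤ) * 2 = (n:ℤ)^2 - (n:ℤ) := by
    rw [choose2_cast]; ring
  have e7 : (∑ H : PSub F k (k-1), ((pmult K H.1).choose 2 : ℤ)) * 2
      = (∑ H : PSub F k (k-1), (pmult K H.1 : ℤ)^2)
        - (∑ H : PSub F k (k-1), (pmult K H.1 : ℤ)) := by
    rw [Finset.sum_mul, ← Finset.sum_sub_distrib]
    refine Finset.sum_congr rfl (fun H _ => ?_)
    rw [choose2_cast]
    ring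
  -- put everything together
  rw [finsum_eq_sum_of_fintype, hT]
  have hsplit : (∑ H : PSub F k (k-1), ((s - pmult K H.1).choose 2 : ℤ))
      = (gauss q k : ℤ) * (s.choose 2 : ℤ)
        - (∑ H : PSub F k (k-1), (pmult K H.1 : ℤ)) * ((s:ℤ) - 1)
        + ∑ H : PSub F k (k-1), ((pmult K H.1).choose 2 : ℤ) := by
    rw [Finset.sum_congr rfl (fun H _ => choose2_shift (hs H)),
      Finset.sum_add_distrib, Finset.sum_sub_distrib, Finset.sum_const,
      Finset.card_univ, ← Finset.sum_mul]
    congr 2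
    rw [← e0]
    simp [mul_comm]
  rw [hsplit, e1]
  apply mul_right_cancel₀ (b := (2:ℤ)) two_ne_zero
  have expand : ((gauss q k : ℤ) * (s.choose 2 : ℤ)
        - (n:ℤ) * (gauss q (k-1) : ℤ) * ((s:ℤ) - 1)
        + ∑ H : PSub F k (k-1), ((pmult K H.1).choose 2 : ℤ)) * 2
      = (gauss q k : ℤ) * (s.choose 2 : ℤ) * 2
        - (n:ℤ) * (gauss q (k-1) : ℤ) * ((s:ℤ) - 1) * 2
        + (∑ H : PSub F k (k-1), ((pmult K H.1).choose 2 : ℤ)) * 2 := by ring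
  rw [expand, e7, e2, e1]
  linear_combination -(gauss q (k-2) : ℤ) * e6 - (q:ℤ)^(k-2) * e5
    + ((∑ P : PSub F k 1, (K P:ℤ)^2) - (n:ℤ)) * e3
end
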